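/- arXiv:2009.03117 — 5 statements merged into one kernel-verified Lean document; each statement's English description precedes it below -/
import Mathlib

section
/- Let Φ denote the standard normal cumulative distribution function, let x ≥ 0, and let (a_n) be a sequence of nonnegative reals with a_n → x. Then log(1 − Φ(√(2 a_n log n)))/log(n) → −x as n → ∞. -/
open MeasureTheory ProbabilityTheory Real Filter Topology

noncomputable section

/-- The standard normal cumulative distribution function `Φ`. -/
def Phi (x : ℝ) : ℝ := ((gaussianReal 0 1) (Set.Iic x)).toReal

lemma pdf_eq (x : ℝ) : gaussianPDFReal 0 1 x = (Real.sqrt (2*π))⁻¹ * Real.exp (-x^2/2) := by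
  simp [gaussianPDFReal]


lemma tail_eq (t : ℝ) : 1 - Phi t = ∫ x in Set.Ioi t, gaussianPDFReal 0 1 x := by
  have h1 : (gaussianReal 0 1) (Set.Ioi t) = 1 - (gaussianReal 0 1) (Set.Iic t) := by
    rw [← Set.compl_Iic]
    exact prob_compl_eq_one_sub measurableSet_Iic
  have h2 := gaussianReal_apply_eq_integral 0 (v := 1) one_ne_zero (Set.Ioi t)
  have h3 : ((gaussianReal 0 1) (Set.Ioi t)).toReal
      = 1 - Phi t := by
    rw [h1, ENNReal.toReal_sub_of_le prob_le_one ENNReal.one_ne_top]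
    simp [Phi]
  rw [← h3, h2, ENNReal.toReal_ofReal]
  exact integral_nonneg fun y => gaussianPDFReal_nonneg _ _ _

lemma tail_lower {t : ℝ} (ht : 0 ≤ t) :
    (Real.sqrt (2*π))⁻¹ * Real.exp (-(t+1)^2/2) ≤ 1 - Phi t := by
  rw [tail_eq]
  have hint : IntegrableOn (gaussianPDFReal 0 1) (Set.Ioi t) :=
    (integrable_gaussianPDFReal 0 1).restrict
  have h1 : (Real.sqrt (2*π))⁻¹ * Real.exp (-(t+1)^2/2)
      = ∫ _x in Set.Ioc t (t+1), (Real.sqrt (2*π))⁻¹ * Real.exp (-(t+1)^2/2) := by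
    rw [setIntegral_const]
    rw [Real.volume_real_Ioc]
    simp
  rw [h1]
  calc ∫ _x in Set.Ioc t (t+1), (Real.sqrt (2*π))⁻¹ * Real.exp (-(t+1)^2/2)
      ≤ ∫ x in Set.Ioc t (t+1), gaussianPDFReal 0 1 x := by
        refine setIntegral_mono_on (integrableOn_const (by simp) enorm_ne_top)
          (hint.mono_set Set.Ioc_subset_Ioi_self) measurableSet_Ioc fun y hy => ?_
        rw [pdf_eq]
        have hy1 : 0 ≤ y := le_trans ht (le_of_lt hy.1)
        have : y^2 ≤ (t+1)^2 := by nlinarith [hy.1, hy.2]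
        have h0 : (0:ℝ) ≤ (Real.sqrt (2*π))⁻¹ := by positivity
        exact mul_le_mul_of_nonneg_left (Real.exp_le_exp.2 (by linarith)) h0
    _ ≤ ∫ x in Set.Ioi t, gaussianPDFReal 0 1 x := by
        refine setIntegral_mono_set hint (ae_of_all _ fun y => gaussianPDFReal_nonneg _ _ _) ?_
        exact HasSubset.Subset.eventuallyLE Set.Ioc_subset_Ioi_self


lemma tail_upper {t : ℝ} (ht : 1 ≤ t) :
    1 - Phi t ≤ Real.exp (-t^2/2) := by
  rw [tail_eq]
  have ht0 : 0 < t := lt_of_lt_of_le one_pos ht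
  have hint : IntegrableOn (gaussianPDFReal 0 1) (Set.Ioi t) :=
    (integrable_gaussianPDFReal 0 1).restrict
  have hintg : IntegrableOn
      (fun x => (Real.sqrt (2*π))⁻¹ * Real.exp (t^2/2) * Real.exp (-(t*x))) (Set.Ioi t) := by
    have h := (exp_neg_integrableOn_Ioi (b := t) t ht0).const_mul
      ((Real.sqrt (2*π))⁻¹ * Real.exp (t^2/2))
    simpa only [neg_mul, IntegrableOn] using h
  have hI : ∫ x in Set.Ioi t, Real.exp (-(t*x)) = t⁻¹ * Real.exp (-(t*t)) := by
    have := integral_comp_mul_left_Ioi (fun y => Real.exp (-y)) t ht0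
    simp only [smul_eq_mul] at this
    rw [this, integral_exp_neg_Ioi]
  calc ∫ x in Set.Ioi t, gaussianPDFReal 0 1 x
      ≤ ∫ x in Set.Ioi t, (Real.sqrt (2*π))⁻¹ * Real.exp (t^2/2) * Real.exp (-(t*x)) := by
        refine setIntegral_mono_on hint hintg measurableSet_Ioi fun y hy => ?_
        rw [pdf_eq, mul_assoc, ← Real.exp_add]
        have h1 : -y^2/2 ≤ t^2/2 + -(t*y) := by nlinarith [sq_nonneg (y - t)]
        have h0 : (0:ℝ) ≤ (Real.sqrt (2*π))⁻¹ := by positivity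
        exact mul_le_mul_of_nonneg_left (Real.exp_le_exp.2 h1) h0
    _ = (Real.sqrt (2*π))⁻¹ * Real.exp (t^2/2) * (t⁻¹ * Real.exp (-(t*t))) := by
        rw [integral_const_mul, hI]
    _ ≤ Real.exp (-t^2/2) := by
        have hc : (Real.sqrt (2*π))⁻¹ ≤ 1 := by
          rw [inv_le_one_iff₀]
          right
          rw [show (1:ℝ) = Real.sqrt 1 by simp]
          exact Real.sqrt_le_sqrt (by nlinarith [Real.pi_gt_three])
        have hti : t⁻¹ ≤ 1 := by
          rw [inv_le_one_iff₀]; right; exact ht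
        have hexp : Real.exp (t^2/2) * Real.exp (-(t*t)) = Real.exp (-t^2/2) := by
          rw [← Real.exp_add]; ring_nf
        calc (Real.sqrt (2*π))⁻¹ * Real.exp (t^2/2) * (t⁻¹ * Real.exp (-(t*t)))
            ≤ 1 * Real.exp (t^2/2) * (1 * Real.exp (-(t*t))) := by
              gcongr
          _ = Real.exp (-t^2/2) := by rw [one_mul, one_mul, hexp]

/-- Lemma 1.  For `x ≥ 0` and nonnegative `a_n → x`,
`1 − Φ(√(2 a_n log n)) = n^{−x + o(1)}`, i.e. the normalized logarithm tends to `−x`. -/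
theorem statement7 (x : ℝ) (hx : 0 ≤ x) (a : ℕ → ℝ) (ha0 : ∀ n, 0 ≤ a n)
    (ha : Tendsto a atTop (𝓝 x)) :
    Tendsto (fun n : ℕ =>
        Real.log (1 - Phi (Real.sqrt (2 * a n * Real.log n))) / Real.log n)
      atTop (𝓝 (-x)) := by
  have hc0 : 0 < (Real.sqrt (2*π))⁻¹ := by positivity
  set c : ℝ := (Real.sqrt (2*π))⁻¹ with hc
  set T : ℕ → ℝ := fun n => Real.sqrt (2 * a n * Real.log n) with hT
  have hlogpos : ∀ n : ℕ, 2 ≤ n → 0 < Real.log n := fun n hn => by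
    have : (1:ℝ) < n := by exact_mod_cast hn.trans_lt' one_lt_two
    exact Real.log_pos this
  have hTnn : ∀ n : ℕ, 0 ≤ T n := fun n => Real.sqrt_nonneg _
  have hTsq : ∀ n : ℕ, T n ^ 2 = 2 * a n * Real.log n := fun n => by
    have hln : 0 ≤ Real.log n := Real.log_natCast_nonneg n
    exact Real.sq_sqrt (mul_nonneg (mul_nonneg zero_le_two (ha0 n)) hln)
  have htail_pos : ∀ n : ℕ, 0 < 1 - Phi (T n) := fun n =>
    lt_of_lt_of_le (by positivity) (tail_lower (hTnn n))
  have htail_le_one : ∀ n : ℕ, 1 - Phi (T n) ≤ 1 := fun n => by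
    have : 0 ≤ Phi (T n) := ENNReal.toReal_nonneg
    linarith
  -- lower bound function and its limit
  set glo : ℕ → ℝ := fun n =>
      -a n - Real.sqrt (2 * a n / Real.log n) + (Real.log c - 1/2) / Real.log n with hglo
  have hinv : Tendsto (fun n : ℕ => (Real.log n)⁻¹) atTop (𝓝 0) :=
    (Real.tendsto_log_atTop.comp tendsto_natCast_atTop_atTop).inv_tendsto_atTop
  have hsqrtlim : Tendsto (fun n : ℕ => Real.sqrt (2 * a n / Real.log n)) atTop (𝓝 0) := by
    have h1 : Tendsto (fun n : ℕ => 2 * a n / Real.log n) atTop (𝓝 0) := by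
      have h2 := (ha.const_mul 2).mul hinv
      rw [mul_zero] at h2
      simpa [div_eq_mul_inv] using h2
    have h2 := (Real.continuous_sqrt.tendsto 0).comp h1
    simpa [Function.comp_def] using h2
  have hglolim : Tendsto glo atTop (𝓝 (-x)) := by
    have h3 : Tendsto (fun n : ℕ => (Real.log c - 1/2) / Real.log n) atTop (𝓝 0) := by
      have h4 := hinv.const_mul (Real.log c - 1/2)
      rw [mul_zero] at h4
      simpa [div_eq_mul_inv] using h4
    have h5 := (ha.neg.sub hsqrtlim).add h3
    rw [sub_zero, add_zero] at h5
    exact h5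
  -- lower inequality
  have hlo : ∀ᶠ n : ℕ in atTop, glo n ≤
      Real.log (1 - Phi (T n)) / Real.log n := by
    filter_upwards [eventually_ge_atTop 2] with n hn
    have hl := hlogpos n hn
    have h2 : Real.log c - (T n + 1)^2/2 ≤ Real.log (1 - Phi (T n)) := by
      have h1 := Real.log_le_log (by positivity) (tail_lower (hTnn n))
      rw [Real.log_mul (ne_of_gt hc0) (Real.exp_ne_zero _), Real.log_exp] at h1
      linarith
    rw [le_div_iff₀ hl]
    refine le_trans (le_of_eq ?_) h2
    -- algebraic identity
    have hb2 : Real.sqrt (2 * a n) ^ 2 = 2 * a n :=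
      Real.sq_sqrt (mul_nonneg zero_le_two (ha0 n))
    have hs2 : Real.sqrt (Real.log n) ^ 2 = Real.log n := Real.sq_sqrt hl.le
    have hsne : Real.sqrt (Real.log n) ≠ 0 := by
      positivity
    have hTm : T n = Real.sqrt (2 * a n) * Real.sqrt (Real.log n) :=
      Real.sqrt_mul (mul_nonneg zero_le_two (ha0 n)) _
    have hdiv : Real.sqrt (2 * a n / Real.log n)
        = Real.sqrt (2 * a n) / Real.sqrt (Real.log n) :=
      Real.sqrt_div (mul_nonneg zero_le_two (ha0 n)) _
    have han : a n = Real.sqrt (2 * a n) ^ 2 / 2 := by rw [hb2]; ring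
    set b := Real.sqrt (2 * a n) with hbdef
    set s := Real.sqrt (Real.log n) with hsdef
    rw [hglo]
    simp only
    rw [hdiv, hTm, han, ← hs2]
    field_simp
    ring
  -- upper inequality and squeeze, by cases on x
  rcases eq_or_lt_of_le hx with hx0 | hxpos
  · -- x = 0 : upper bound by 0
    have hhi : ∀ᶠ n : ℕ in atTop,
        Real.log (1 - Phi (T n)) / Real.log n ≤ 0 := by
      filter_upwards [eventually_ge_atTop 2] with n hn
      apply div_nonpos_of_nonpos_of_nonneg
      · exact Real.log_nonpos (htail_pos n).le (htail_le_one n)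
      · exact (hlogpos n hn).le
    have h0 : Tendsto (fun _ : ℕ => (0:ℝ)) atTop (𝓝 (-x)) := by
      rw [← hx0, neg_zero]; exact tendsto_const_nhds
    exact tendsto_of_tendsto_of_tendsto_of_le_of_le' hglolim h0 hlo hhi
  · -- x > 0
    have hhi : ∀ᶠ n : ℕ in atTop,
        Real.log (1 - Phi (T n)) / Real.log n ≤ -a n := by
      have hev1 : ∀ᶠ n : ℕ in atTop, x/2 < a n :=
        ha.eventually (eventually_gt_nhds (by linarith))
      have hev2 : ∀ᶠ n : ℕ in atTop, 2/x ≤ Real.log n :=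
        (Real.tendsto_log_atTop.comp tendsto_natCast_atTop_atTop).eventually_ge_atTop (2/x)
      filter_upwards [eventually_ge_atTop 2, hev1, hev2] with n hn h1 h2
      have hl := hlogpos n hn
      have hT1 : 1 ≤ T n := by
        rw [show (1:ℝ) = Real.sqrt 1 by simp]
        apply Real.sqrt_le_sqrt
        have e2 : (2/x) * (x/2) ≤ Real.log n * a n :=
          mul_le_mul h2 h1.le (by positivity) hl.le
        have e1 : (2/x) * (x/2) = 1 := by field_simp
        rw [e1] at e2
        nlinarith [ha0 n, Real.log_natCast_nonneg n]
      have h3 : Real.log (1 - Phi (T n)) ≤ -(a n * Real.log n) := by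
        have h4 := Real.log_le_log (htail_pos n) (tail_upper hT1)
        rw [Real.log_exp, hTsq n] at h4
        calc Real.log (1 - Phi (T n)) ≤ -(2 * a n * Real.log n)/2 := h4
          _ = -(a n * Real.log n) := by ring
      rw [div_le_iff₀ hl]
      calc Real.log (1 - Phi (T n)) ≤ -(a n * Real.log n) := h3
        _ = -a n * Real.log n := by ring
    have hhilim : Tendsto (fun n => -a n) atTop (𝓝 (-x)) := ha.neg
    exact tendsto_of_tendsto_of_tendsto_of_le_of_le' hglolim hhilim hlo hhi
end
end

section
/- Let z₁, …, z_N be real numbers, not all equal, and let 1 ≤ m ≤ N. Let (Z₁, …, Z_m) be sampled uniformly at random without replacement from {z₁, …, z_N} (i.e. Z_k = z_{σ(k)} for a uniformly random permutation σ of {1,…,N}). Set z̄ = (1/N) Σ_{j≤N} z_j, σ_z² = (1/N) Σ_{j≤N} (z_j − z̄)², z_max = max_j z_j, and Z̄ = (1/m) Σ_{k≤m} Z_k. Then for every τ ≥ 0, P(Z̄ ≥ z̄ + τ) ≤ exp(−m τ² / (2 σ_z² + (2/3)(z_max − z̄) τ)). -/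
open MeasureTheory Real Filter

attribute [local instance] Classical.propDecidable

noncomputable section


open Nat in
lemma stmt8_real_exp_tsum (y : ℝ) : Real.exp y = ∑' n : ℕ, y ^ n / n ! := by
  rw [Real.exp_eq_exp_ℝ, NormedSpace.exp_eq_tsum_div]

open Nat in
lemma stmt8_fact_ge (n : ℕ) : 2 * 3 ^ n ≤ (n + 2)! := by
  induction n with
  | zero => simp [Nat.factorial]
  | succ k ih =>
    calc 2 * 3 ^ (k + 1) = 3 * (2 * 3 ^ k) := by ring
    _ ≤ 3 * (k + 2)! := by omega
    _ ≤ (k + 3) * (k + 2)! := by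
        have := (k + 2).factorial_pos
        nlinarith
    _ = (k + 3)! := rfl

open Nat in
lemma stmt8_exp_pos_bound {y : ℝ} (hy0 : 0 ≤ y) (hy3 : y < 3) :
    Real.exp y ≤ 1 + y + y ^ 2 / 2 * (1 - y / 3)⁻¹ := by
  have hsum := Real.summable_pow_div_factorial y
  have hshift : Summable (fun n : ℕ => y ^ (n + 2) / (n + 2)!) := by
    exact (summable_nat_add_iff 2).2 hsum
  have hr : (0:ℝ) ≤ y / 3 := by linarith
  have hr1 : y / 3 < 1 := by linarith
  have hgeo : Summable (fun n : ℕ => y ^ 2 / 2 * (y / 3) ^ n) :=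
    (summable_geometric_of_lt_one hr hr1).mul_left _
  have key : ∑' n : ℕ, y ^ (n + 2) / (n + 2)! ≤ y ^ 2 / 2 * (1 - y / 3)⁻¹ := by
    calc ∑' n : ℕ, y ^ (n + 2) / (n + 2)!
        ≤ ∑' n : ℕ, y ^ 2 / 2 * (y / 3) ^ n := by
          refine Summable.tsum_le_tsum (fun n => ?_) hshift hgeo
          have h2 : (0:ℝ) < 2 * 3 ^ n := by positivity
          have hf : (2 * 3 ^ n : ℝ) ≤ (n + 2)! := by exact_mod_cast stmt8_fact_ge n
          have hyp : (0:ℝ) ≤ y ^ (n + 2) := by positivity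
          calc y ^ (n + 2) / (n + 2)! ≤ y ^ (n + 2) / (2 * 3 ^ n) := by
                apply div_le_div_of_nonneg_left hyp h2 ?_ |>.trans_eq rfl
                exact hf
          _ = y ^ 2 / 2 * (y / 3) ^ n := by
                rw [div_pow, pow_add]
                ring
      _ = y ^ 2 / 2 * ∑' n : ℕ, (y / 3) ^ n := by rw [tsum_mul_left]
      _ = y ^ 2 / 2 * (1 - y / 3)⁻¹ := by rw [tsum_geometric_of_lt_one hr hr1]
  have hsplit : (∑ n ∈ Finset.range 2, y ^ n / n !) + ∑' n : ℕ, y ^ (n + 2) / (n + 2)!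
      = ∑' n : ℕ, y ^ n / n ! := Summable.sum_add_tsum_nat_add 2 hsum
  have hfin : (∑ n ∈ Finset.range 2, y ^ n / n !) = 1 + y := by
    simp [Finset.sum_range_succ, Nat.factorial]
  rw [stmt8_real_exp_tsum, ← hsplit, hfin]
  linarith

lemma stmt8_exp_neg_bound {y : ℝ} (hy : y ≤ 0) : Real.exp y ≤ 1 + y + y ^ 2 / 2 := by
  set f : ℝ → ℝ := fun x => 1 + x + x ^ 2 / 2 - Real.exp x with hf
  have hd : ∀ x : ℝ, HasDerivAt f (1 + x - Real.exp x) x := by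
    intro x
    have h1 : HasDerivAt (fun x : ℝ => 1 + x + x ^ 2 / 2) (1 + x) x := by
      have := ((hasDerivAt_id x).const_add 1).add ((hasDerivAt_pow 2 x).div_const 2)
      refine this.congr_deriv ?_
      ring
    exact h1.sub (Real.hasDerivAt_exp x)
  have hanti : Antitone f := by
    apply antitone_of_deriv_nonpos
    · exact fun x => (hd x).differentiableAt
    · intro x
      rw [(hd x).deriv]
      have := Real.add_one_le_exp x
      linarith
  have := hanti hy
  simp only [hf] at this
  norm_num at this
  linarith [this]

lemma stmt8_exp_pointwise {u y : ℝ} (hu0 : 0 ≤ u) (hu3 : u < 3) (hy : y ≤ u) :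
    Real.exp y ≤ 1 + y + y ^ 2 / 2 * (1 - u / 3)⁻¹ := by
  have hpos : (0:ℝ) < 1 - u / 3 := by linarith
  have hK1 : (1:ℝ) ≤ (1 - u / 3)⁻¹ := by
    rw [le_inv_comm₀ one_pos hpos]
    linarith
  rcases le_or_gt y 0 with h | h
  · have h1 := stmt8_exp_neg_bound h
    nlinarith [sq_nonneg y]
  · have h1 := stmt8_exp_pos_bound h.le (lt_of_le_of_lt hy hu3)
    have hpos' : (0:ℝ) < 1 - y / 3 := by
      have := lt_of_le_of_lt hy hu3
      linarith
    have h2 : (1 - y / 3)⁻¹ ≤ (1 - u / 3)⁻¹ := by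
      apply inv_anti₀ hpos
      linarith
    nlinarith [sq_nonneg y]
open Nat in
lemma stmt8_maclaurin_step (n : ℕ) (a : Fin n → ℝ) (ha : ∀ j, 0 ≤ a j) (m : ℕ) (hm : m < n) :
    (n : ℝ) * ∑ σ : Equiv.Perm (Fin n),
        (∏ k ∈ Finset.univ.filter fun k : Fin n => (k : ℕ) < m, a (σ k)) * a (σ ⟨m, hm⟩)
      ≤ (∑ j, a j) * ∑ σ : Equiv.Perm (Fin n),
          ∏ k ∈ Finset.univ.filter fun k : Fin n => (k : ℕ) < m, a (σ k) := by
  set M : Fin n := ⟨m, hm⟩ with hM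
  set s : Finset (Fin n) := Finset.univ.filter fun k : Fin n => (k : ℕ) < m with hs
  have hMs : M ∉ s := by simp [hs, hM]
  have hks : ∀ k ∈ s, (k : ℕ) < m := by intro k hk; simpa [hs] using hk
  have hP0 : ∀ σ : Equiv.Perm (Fin n), 0 ≤ ∏ k ∈ s, a (σ k) :=
    fun σ => Finset.prod_nonneg fun k _ => ha _
  -- RHS rewrite
  have hrhs : (∑ j, a j) * ∑ σ : Equiv.Perm (Fin n), ∏ k ∈ s, a (σ k)
      = ∑ i : Fin n, ∑ σ : Equiv.Perm (Fin n), (∏ k ∈ s, a (σ k)) * a (σ i) := by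
    rw [Finset.mul_sum]
    rw [Finset.sum_congr rfl (fun (σ : Equiv.Perm (Fin n)) _ => by
      rw [← Equiv.sum_comp σ a, Finset.sum_mul]
      exact Finset.sum_congr rfl (fun i _ => mul_comm _ _) :
      ∀ σ ∈ (Finset.univ : Finset (Equiv.Perm (Fin n))),
        (∑ j, a j) * ∏ k ∈ s, a (σ k) = ∑ i : Fin n, (∏ k ∈ s, a (σ k)) * a (σ i))]
    rw [Finset.sum_comm]
  have hlhs : (n : ℝ) * ∑ σ : Equiv.Perm (Fin n), (∏ k ∈ s, a (σ k)) * a (σ M)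
      = ∑ _i : Fin n, ∑ σ : Equiv.Perm (Fin n), (∏ k ∈ s, a (σ k)) * a (σ M) := by
    rw [Finset.sum_const, Finset.card_univ, Fintype.card_fin, nsmul_eq_mul]
  rw [hrhs, hlhs]
  apply Finset.sum_le_sum
  intro i _
  by_cases hi : (i : ℕ) < m
  · -- i occupies a position in s
    have hiM : i ≠ M := by
      intro h; rw [h] at hi; simp [hM] at hi
    have his : i ∈ s := by simp [hs, hi]
    set e : Equiv.Perm (Fin n) := Equiv.swap M i with he
    have hPe : ∀ σ : Equiv.Perm (Fin n),
        (∏ k ∈ s.erase i, a ((σ * e) k)) = ∏ k ∈ s.erase i, a (σ k) := by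
      intro σ
      apply Finset.prod_congr rfl
      intro k hk
      have hk1 : k ≠ i := Finset.ne_of_mem_erase hk
      have hk2 : k ≠ M := by
        intro h
        have := hks k (Finset.mem_of_mem_erase hk)
        rw [h] at this; simp [hM] at this
      simp [Equiv.Perm.mul_apply, he, Equiv.swap_apply_of_ne_of_ne hk2 hk1]
    have hprod : ∀ σ : Equiv.Perm (Fin n), ∏ k ∈ s, a (σ k)
        = a (σ i) * ∏ k ∈ s.erase i, a (σ k) := by
      intro σ
      exact (Finset.mul_prod_erase s (fun k => a (σ k)) his).symm
    have hswap : ∀ g : Equiv.Perm (Fin n) → ℝ,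
        ∑ σ : Equiv.Perm (Fin n), g (σ * e) = ∑ σ : Equiv.Perm (Fin n), g σ :=
      fun g => Equiv.sum_comp (Equiv.mulRight e) g
    have hsq : ∑ σ : Equiv.Perm (Fin n), a (σ M) ^ 2 * ∏ k ∈ s.erase i, a (σ k)
        = ∑ σ : Equiv.Perm (Fin n), a (σ i) ^ 2 * ∏ k ∈ s.erase i, a (σ k) := by
      rw [← hswap (fun σ => a (σ M) ^ 2 * ∏ k ∈ s.erase i, a (σ k))]
      apply Finset.sum_congr rfl
      intro σ _
      rw [hPe σ]
      congr 2
      simp [Equiv.Perm.mul_apply, he]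
    calc ∑ σ : Equiv.Perm (Fin n), (∏ k ∈ s, a (σ k)) * a (σ M)
        = ∑ σ : Equiv.Perm (Fin n),
            a (σ i) * a (σ M) * ∏ k ∈ s.erase i, a (σ k) := by
          apply Finset.sum_congr rfl; intro σ _; rw [hprod σ]; ring
      _ ≤ ∑ σ : Equiv.Perm (Fin n),
            (a (σ i) ^ 2 + a (σ M) ^ 2) / 2 * ∏ k ∈ s.erase i, a (σ k) := by
          apply Finset.sum_le_sum
          intro σ _
          have h2 : a (σ i) * a (σ M) ≤ (a (σ i) ^ 2 + a (σ M) ^ 2) / 2 := by nlinarith [sq_nonneg (a (σ i) - a (σ M))]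
          exact mul_le_mul_of_nonneg_right h2 (Finset.prod_nonneg fun k _ => ha _)
      _ = ∑ σ : Equiv.Perm (Fin n), a (σ i) ^ 2 * ∏ k ∈ s.erase i, a (σ k) := by
          rw [Finset.sum_congr rfl (fun σ _ => by ring :
            ∀ σ ∈ (Finset.univ : Finset (Equiv.Perm (Fin n))),
              (a (σ i) ^ 2 + a (σ M) ^ 2) / 2 * ∏ k ∈ s.erase i, a (σ k)
                = (a (σ i) ^ 2 * ∏ k ∈ s.erase i, a (σ k)
                  + a (σ M) ^ 2 * ∏ k ∈ s.erase i, a (σ k)) / 2)]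
          rw [← Finset.sum_div, Finset.sum_add_distrib, hsq]
          ring
      _ = ∑ σ : Equiv.Perm (Fin n), (∏ k ∈ s, a (σ k)) * a (σ i) := by
          apply Finset.sum_congr rfl; intro σ _; rw [hprod σ]; ring
  · -- i is outside the sampled positions: equality by symmetry
    set e : Equiv.Perm (Fin n) := Equiv.swap M i with he
    have key : ∑ σ : Equiv.Perm (Fin n), (∏ k ∈ s, a (σ k)) * a (σ M)
        = ∑ σ : Equiv.Perm (Fin n), (∏ k ∈ s, a (σ k)) * a (σ i) := by
      rw [← Equiv.sum_comp (Equiv.mulRight e)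
        (fun σ => (∏ k ∈ s, a (σ k)) * a (σ i))]
      apply Finset.sum_congr rfl
      intro σ _
      have h1 : ∀ k ∈ s, a ((Equiv.mulRight e σ) k) = a (σ k) := by
        intro k hk
        have hkm := hks k hk
        have hk2 : k ≠ M := by intro h; rw [h] at hkm; simp [hM] at hkm
        have hk1 : k ≠ i := by intro h; rw [h] at hkm; exact hi hkm
        simp [Equiv.Perm.mul_apply, he, Equiv.swap_apply_of_ne_of_ne hk2 hk1]
      rw [Finset.prod_congr rfl h1]
      congr 1
      simp [Equiv.Perm.mul_apply, he]
    rw [key]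

open Nat in
lemma stmt8_maclaurin (n : ℕ) (hn : 0 < n) (a : Fin n → ℝ) (ha : ∀ j, 0 ≤ a j) :
    ∀ m, m ≤ n →
      ∑ σ : Equiv.Perm (Fin n), ∏ k ∈ Finset.univ.filter fun k : Fin n => (k : ℕ) < m, a (σ k)
        ≤ n ! * ((∑ j, a j) / n) ^ m := by
  intro m
  induction m with
  | zero =>
    intro _
    have h1 : (Finset.univ.filter fun k : Fin n => (k : ℕ) < 0) = ∅ := by
      ext k; simp
    simp only [h1, Finset.prod_empty, pow_zero, mul_one]
    rw [Finset.sum_const, Finset.card_univ, nsmul_eq_mul, mul_one]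
    norm_cast
    rw [Fintype.card_perm, Fintype.card_fin]
  | succ m ih =>
    intro hm1
    have hm : m < n := hm1
    set M : Fin n := ⟨m, hm⟩ with hMdef
    have hMs : M ∉ Finset.univ.filter fun k : Fin n => (k : ℕ) < m := by simp [hMdef]
    have hset : (Finset.univ.filter fun k : Fin n => (k : ℕ) < m + 1)
        = insert M (Finset.univ.filter fun k : Fin n => (k : ℕ) < m) := by
      ext k
      simp [hMdef, Fin.ext_iff]
      omega
    have hsplit : ∀ σ : Equiv.Perm (Fin n),
        (∏ k ∈ Finset.univ.filter fun k : Fin n => (k : ℕ) < m + 1, a (σ k))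
          = (∏ k ∈ Finset.univ.filter fun k : Fin n => (k : ℕ) < m, a (σ k)) * a (σ M) := by
      intro σ
      rw [hset, Finset.prod_insert hMs]
      ring
    rw [Finset.sum_congr rfl fun σ _ => hsplit σ]
    have hstep := stmt8_maclaurin_step n a ha m hm
    have hS0 : (0 : ℝ) ≤ ∑ j, a j := Finset.sum_nonneg fun j _ => ha j
    have hn' : (0 : ℝ) < n := by exact_mod_cast hn
    have h1 : ∑ σ : Equiv.Perm (Fin n),
          (∏ k ∈ Finset.univ.filter fun k : Fin n => (k : ℕ) < m, a (σ k)) * a (σ M)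
        ≤ (∑ j, a j) / n
          * ∑ σ : Equiv.Perm (Fin n),
              ∏ k ∈ Finset.univ.filter fun k : Fin n => (k : ℕ) < m, a (σ k) := by
      rw [div_mul_eq_mul_div, le_div_iff₀ hn']
      calc _ = (n : ℝ) * ∑ σ : Equiv.Perm (Fin n),
          (∏ k ∈ Finset.univ.filter fun k : Fin n => (k : ℕ) < m, a (σ k)) * a (σ M) := by ring
        _ ≤ _ := hstep
    calc _ ≤ (∑ j, a j) / n
          * ∑ σ : Equiv.Perm (Fin n),
              ∏ k ∈ Finset.univ.filter fun k : Fin n => (k : ℕ) < m, a (σ k) := h1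
      _ ≤ (∑ j, a j) / n * (n ! * ((∑ j, a j) / n) ^ m) := by
          apply mul_le_mul_of_nonneg_left (ih hm.le) (by positivity)
      _ = n ! * ((∑ j, a j) / n) ^ (m + 1) := by ring

set_option maxHeartbeats 1000000 in
/-- Lemma 3: Bernstein bound for sampling without replacement.
If `(Z₁, …, Z_m)` are sampled uniformly without replacement from `{z₁, …, z_N}`
(realized as `Z_k = z_{σ(k)}` for a uniformly random permutation `σ`), then for all
`τ ≥ 0`, `P(Z̄ ≥ z̄ + τ) ≤ exp(−m τ²/(2 σ_z² + (2/3)(z_max − z̄) τ))`. -/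
theorem statement8 (N m : ℕ) (hm : 1 ≤ m) (hmN : m ≤ N) (z : Fin N → ℝ)
    (hne : ∃ j k, z j ≠ z k) (τ : ℝ) (hτ : 0 ≤ τ) :
    ((Finset.univ.filter fun σ : Equiv.Perm (Fin N) =>
        (∑ k ∈ Finset.univ.filter fun k : Fin N => (k : ℕ) < m, z (σ k)) / m
          ≥ (∑ j, z j) / N + τ).card : ℝ) / N.factorial
      ≤ Real.exp (-(m * τ ^ 2) /
          (2 * ((∑ j, (z j - (∑ j', z j') / N) ^ 2) / N) +
            2 / 3 * ((⨆ j, z j) - (∑ j', z j') / N) * τ)) := by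

  classical
  have hN : 0 < N := hm.trans hmN
  have hNR : (0 : ℝ) < N := by exact_mod_cast hN
  have hmR : (0 : ℝ) < m := by exact_mod_cast hm
  haveI : Nonempty (Fin N) := ⟨⟨0, hN⟩⟩
  have hfacpos : (0 : ℝ) < N.factorial := by exact_mod_cast N.factorial_pos
  set zbar : ℝ := (∑ j', z j') / N with hzbar
  set v : ℝ := (∑ j, (z j - zbar) ^ 2) / N with hv
  set c : ℝ := (⨆ j, z j) - zbar with hc
  have hsz : ∑ j, z j = N * zbar := by
    rw [hzbar]; field_simp
  have hw0 : ∑ j, (z j - zbar) = 0 := by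
    rw [Finset.sum_sub_distrib, hsz, Finset.sum_const, Finset.card_univ, Fintype.card_fin,
      nsmul_eq_mul]
    ring
  have hw2 : ∑ j, (z j - zbar) ^ 2 = N * v := by
    rw [hv]; field_simp
  obtain ⟨j0, hj0⟩ : ∃ j, z j ≠ zbar := by
    by_contra h
    push_neg at h
    obtain ⟨j, k, hjk⟩ := hne
    exact hjk (by rw [h j, h k])
  have hvpos : 0 < v := by
    have h1 : (0 : ℝ) < (z j0 - zbar) ^ 2 := by
      have : z j0 - zbar ≠ 0 := sub_ne_zero_of_ne hj0
      positivity
    have h2 : (z j0 - zbar) ^ 2 ≤ ∑ j, (z j - zbar) ^ 2 :=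
      Finset.single_le_sum (f := fun j => (z j - zbar) ^ 2)
        (fun j _ => sq_nonneg _) (Finset.mem_univ j0)
    rw [hv]
    exact div_pos (lt_of_lt_of_le h1 h2) hNR
  have hsup : ∀ j, z j ≤ ⨆ j, z j := fun j =>
    le_ciSup (Set.Finite.bddAbove (Set.finite_range z)) j
  have hcpos : 0 < c := by
    obtain ⟨j1, hj1⟩ : ∃ j, zbar < z j := by
      by_contra h
      push_neg at h
      have hlt : z j0 < zbar := lt_of_le_of_ne (h j0) hj0
      have hstrict := Finset.sum_lt_sum (fun j (_ : j ∈ Finset.univ) => h j)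
        ⟨j0, Finset.mem_univ j0, hlt⟩
      rw [hsz, Finset.sum_const, Finset.card_univ, Fintype.card_fin, nsmul_eq_mul] at hstrict
      exact lt_irrefl _ hstrict
    have := hsup j1
    rw [hc]
    linarith
  rcases eq_or_lt_of_le hτ with hτ0 | hτpos
  · -- τ = 0 : trivial bound
    rw [← hτ0]
    have hE : -((m : ℝ) * 0 ^ 2) / (2 * v + 2 / 3 * c * 0) = 0 := by norm_num
    rw [hE, Real.exp_zero, div_le_one hfacpos]
    have hcard := Finset.card_filter_le (Finset.univ : Finset (Equiv.Perm (Fin N)))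
      (fun σ : Equiv.Perm (Fin N) =>
        (∑ k ∈ Finset.univ.filter fun k : Fin N => (k : ℕ) < m, z (σ k)) / m
          ≥ zbar + 0)
    have hcu : (Finset.univ : Finset (Equiv.Perm (Fin N))).card = N.factorial := by
      rw [Finset.card_univ, Fintype.card_perm, Fintype.card_fin]
    rw [hcu] at hcard
    exact_mod_cast hcard
  · -- τ > 0 : Chernoff + Maclaurin + Bernstein MGF bound
    set D : ℝ := v + c * τ / 3 with hD
    have hDpos : 0 < D := by rw [hD]; positivity
    set L : ℝ := τ / D with hL
    have hLpos : 0 < L := by positivity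
    set u : ℝ := L * c with hu
    have hu0 : 0 ≤ u := by positivity
    have hu3 : u < 3 := by
      rw [hu, hL, div_mul_eq_mul_div, div_lt_iff₀ hDpos, hD]
      nlinarith
    set K : ℝ := (1 - u / 3)⁻¹ with hKdef
    have hKD : K = D / v := by
      have h1 : 1 - u / 3 = v / D := by
        rw [hu, hL, hD]
        field_simp
        ring
      rw [hKdef, h1, inv_div]
    set a : Fin N → ℝ := fun j => Real.exp (L * z j) with ha
    have ha0 : ∀ j, 0 ≤ a j := fun j => (Real.exp_pos _).le
    set S : Equiv.Perm (Fin N) → ℝ :=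
      fun σ => ∑ k ∈ Finset.univ.filter fun k : Fin N => (k : ℕ) < m, z (σ k) with hS
    set F : Finset (Equiv.Perm (Fin N)) :=
      Finset.univ.filter fun σ : Equiv.Perm (Fin N) => S σ / m ≥ zbar + τ with hF
    -- Chernoff step
    have hcard : (F.card : ℝ)
        ≤ ∑ σ : Equiv.Perm (Fin N), Real.exp (L * S σ - L * m * (zbar + τ)) := by
      have h1 : (F.card : ℝ) = ∑ σ ∈ F, (1 : ℝ) := by
        rw [Finset.sum_const, nsmul_eq_mul, mul_one]
      rw [h1]
      calc ∑ σ ∈ F, (1 : ℝ)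
          ≤ ∑ σ ∈ F, Real.exp (L * S σ - L * m * (zbar + τ)) := by
            apply Finset.sum_le_sum
            intro σ hσ
            have hσ' : zbar + τ ≤ S σ / m := by
              have := Finset.mem_filter.1 hσ
              exact this.2
            have h2 : (m : ℝ) * (zbar + τ) ≤ S σ := by
              rw [le_div_iff₀ hmR] at hσ'
              linarith
            have h3 : 0 ≤ L * S σ - L * m * (zbar + τ) := by
              have := mul_le_mul_of_nonneg_left h2 hLpos.le
              nlinarith
            exact Real.one_le_exp h3
        _ ≤ ∑ σ : Equiv.Perm (Fin N), Real.exp (L * S σ - L * m * (zbar + τ)) :=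
            Finset.sum_le_sum_of_subset_of_nonneg (Finset.filter_subset _ _)
              (fun σ _ _ => (Real.exp_pos _).le)
    have hexpS : ∀ σ : Equiv.Perm (Fin N),
        Real.exp (L * S σ) = ∏ k ∈ Finset.univ.filter fun k : Fin N => (k : ℕ) < m, a (σ k) := by
      intro σ
      rw [hS, Finset.mul_sum, Real.exp_sum]
    have hmac := stmt8_maclaurin N hN a ha0 m hmN
    -- bound A
    have hApt : ∀ j, a j ≤ Real.exp (L * zbar)
        * (1 + L * (z j - zbar) + (L * (z j - zbar)) ^ 2 / 2 * K) := by
      intro j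
      have h1 : L * z j = L * zbar + L * (z j - zbar) := by ring
      rw [ha]
      simp only []
      rw [h1, Real.exp_add]
      apply mul_le_mul_of_nonneg_left _ (Real.exp_pos _).le
      apply stmt8_exp_pointwise hu0 hu3
      have h2 : z j - zbar ≤ c := by
        have := hsup j
        rw [hc]; linarith
      exact (mul_le_mul_of_nonneg_left h2 hLpos.le).trans_eq hu.symm
    have hAsum : ∑ j, a j ≤ N * (Real.exp (L * zbar) * (1 + L ^ 2 * v * K / 2)) := by
      calc ∑ j, a j
          ≤ ∑ j, Real.exp (L * zbar)
              * (1 + L * (z j - zbar) + (L * (z j - zbar)) ^ 2 / 2 * K) :=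
            Finset.sum_le_sum fun j _ => hApt j
        _ = Real.exp (L * zbar)
            * ∑ j, (1 + L * (z j - zbar) + L ^ 2 * K / 2 * (z j - zbar) ^ 2) := by
            rw [← Finset.mul_sum]
            congr 1
            apply Finset.sum_congr rfl
            intro j _
            ring
        _ = Real.exp (L * zbar)
            * ((N : ℝ) + L * ∑ j, (z j - zbar) + L ^ 2 * K / 2 * ∑ j, (z j - zbar) ^ 2) := by
            congr 1
            rw [Finset.sum_add_distrib, Finset.sum_add_distrib, ← Finset.mul_sum,
              ← Finset.mul_sum, Finset.sum_const, Finset.card_univ, Fintype.card_fin,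
              nsmul_eq_mul, mul_one]
        _ = N * (Real.exp (L * zbar) * (1 + L ^ 2 * v * K / 2)) := by
            rw [hw0, hw2]
            ring
    have hABound : (∑ j, a j) / N ≤ Real.exp (L * zbar) * (1 + L ^ 2 * v * K / 2) := by
      rw [div_le_iff₀ hNR]
      linarith [hAsum]
    set B : ℝ := Real.exp (L * zbar + L ^ 2 * v * K / 2) with hB
    have hAB : (∑ j, a j) / N ≤ B := by
      refine hABound.trans ?_
      rw [hB, Real.exp_add]
      have := Real.add_one_le_exp (L ^ 2 * v * K / 2)
      have h1 : 1 + L ^ 2 * v * K / 2 ≤ Real.exp (L ^ 2 * v * K / 2) := by linarith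
      exact mul_le_mul_of_nonneg_left h1 (Real.exp_pos _).le
    have hA0 : 0 ≤ (∑ j, a j) / N :=
      div_nonneg (Finset.sum_nonneg fun j _ => ha0 j) hNR.le
    -- combine
    have hmain : (F.card : ℝ)
        ≤ N.factorial * Real.exp (m * (L * zbar + L ^ 2 * v * K / 2) - L * m * (zbar + τ)) := by
      calc (F.card : ℝ)
          ≤ ∑ σ : Equiv.Perm (Fin N), Real.exp (L * S σ - L * m * (zbar + τ)) := hcard
        _ = Real.exp (-(L * m * (zbar + τ)))
            * ∑ σ : Equiv.Perm (Fin N),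
                ∏ k ∈ Finset.univ.filter fun k : Fin N => (k : ℕ) < m, a (σ k) := by
            rw [Finset.mul_sum]
            apply Finset.sum_congr rfl
            intro σ _
            rw [← hexpS σ, ← Real.exp_add]
            congr 1
            ring
        _ ≤ Real.exp (-(L * m * (zbar + τ))) * (N.factorial * ((∑ j, a j) / N) ^ m) := by
            apply mul_le_mul_of_nonneg_left _ (Real.exp_pos _).le
            exact hmac
        _ ≤ Real.exp (-(L * m * (zbar + τ))) * (N.factorial * B ^ m) := by
            apply mul_le_mul_of_nonneg_left _ (Real.exp_pos _).le
            apply mul_le_mul_of_nonneg_left _ hfacpos.le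
            exact pow_le_pow_left₀ hA0 hAB m
        _ = N.factorial * Real.exp (m * (L * zbar + L ^ 2 * v * K / 2) - L * m * (zbar + τ)) := by
            rw [hB, ← Real.exp_nat_mul, sub_eq_add_neg, Real.exp_add]
            ring
    clear_value zbar v c D L u K a S F B
    have hEeq : (m : ℝ) * (L * zbar + L ^ 2 * v * K / 2) - L * m * (zbar + τ)
        = -((m : ℝ) * τ ^ 2) / (2 * v + 2 / 3 * c * τ) := by
      have h2D : 2 * v + 2 / 3 * c * τ = 2 * D := by rw [hD]; ring
      rw [h2D, hKD, hL]
      field_simp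
      ring
    rw [div_le_iff₀ hfacpos]
    rw [← hEeq]
    calc (F.card : ℝ) ≤ _ := hmain
      _ = Real.exp ((m : ℝ) * (L * zbar + L ^ 2 * v * K / 2) - L * m * (zbar + τ))
            * N.factorial := by ring
end
end

section
/- Let n, s be positive integers with 2s ≤ n, and let S and S' be independent random subsets of {1, …, n}, each uniformly distributed over the s-element subsets. Then for every c ≥ 0, E[exp(c · |S ∩ S'|)] ≤ (1 − s/(n−s) + (s/(n−s)) e^c)^s. -/
open Real Finset

noncomputable section

lemma statement13_natA (n s : ℕ) (hs : 0 < s) (h2s : 2*s ≤ n) :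
    ∀ j, j ≤ s → (n-s)^j * Nat.choose (n-j) (s-j) ≤ Nat.choose n s * s^j := by
  intro j
  induction j with
  | zero => simp
  | succ j ih =>
    intro hj
    have ihj := ih (by omega)
    have step : (n-s) * Nat.choose (n-(j+1)) (s-(j+1)) ≤ s * Nat.choose (n-j) (s-j) := by
      have h1 : n - j = (n - j - 1) + 1 := by omega
      have h2 : s - j = (s - j - 1) + 1 := by omega
      have hid := Nat.add_one_mul_choose_eq (n - j - 1) (s - j - 1)
      rw [← h1, ← h2] at hid
      have hineq : (n - s) * (s - j) ≤ s * (n - j) := by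
        zify [show j ≤ s by omega, show s ≤ n by omega, show j ≤ n by omega]
        nlinarith
      have h3 : n - (j+1) = n - j - 1 := by omega
      have h4 : s - (j+1) = s - j - 1 := by omega
      rw [h3, h4]
      apply Nat.le_of_mul_le_mul_left _ (show 0 < n - j by omega)
      calc (n-j) * ((n-s) * Nat.choose (n-j-1) (s-j-1))
          = (n-s) * ((n-j) * Nat.choose (n-j-1) (s-j-1)) := by ring
        _ = Nat.choose (n-j) (s-j) * ((n-s) * (s-j)) := by rw [hid]; ring
        _ ≤ Nat.choose (n-j) (s-j) * (s * (n-j)) := Nat.mul_le_mul_left _ hineq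
        _ = (n-j) * (s * Nat.choose (n-j) (s-j)) := by ring
    calc (n-s)^(j+1) * Nat.choose (n-(j+1)) (s-(j+1))
        = (n-s)^j * ((n-s) * Nat.choose (n-(j+1)) (s-(j+1))) := by ring
      _ ≤ (n-s)^j * (s * Nat.choose (n-j) (s-j)) := Nat.mul_le_mul_left _ step
      _ = s * ((n-s)^j * Nat.choose (n-j) (s-j)) := by ring
      _ ≤ s * (Nat.choose n s * s^j) := Nat.mul_le_mul_left _ ihj
      _ = Nat.choose n s * s^(j+1) := by ring

lemma statement13_realA (n s : ℕ) (hs : 0 < s) (h2s : 2*s ≤ n) (j : ℕ) (hj : j ≤ s) :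
    ((n-j).choose (s-j) : ℝ) ≤ (n.choose s : ℝ) * ((s:ℝ)/((n:ℝ)-(s:ℝ)))^j := by
  have hns : ((n:ℝ) - s) = ((n - s : ℕ) : ℝ) := by rw [Nat.cast_sub (by omega)]
  have hpos : (0:ℝ) < ((n-s:ℕ):ℝ) := by
    have : 0 < n - s := by omega
    exact_mod_cast this
  have h := statement13_natA n s hs h2s j hj
  have h' : (((n-s:ℕ):ℝ))^j * ((n-j).choose (s-j) : ℝ) ≤ (n.choose s : ℝ) * (s:ℝ)^j := by
    exact_mod_cast h
  rw [hns, div_pow, ← mul_div_assoc]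
  rw [le_div_iff₀ (by positivity)]
  linarith [h']

lemma statement13_countB (n s : ℕ) (T : Finset (Fin n)) :
    ((Finset.powersetCard s (univ : Finset (Fin n))).filter (fun S' => T ⊆ S')).card
      ≤ (n - T.card).choose (s - T.card) := by
  have key : ((Finset.powersetCard s (univ : Finset (Fin n))).filter (fun S' => T ⊆ S')).card
      ≤ (Finset.powersetCard (s - T.card) Tᶜ).card := by
    apply Finset.card_le_card_of_injOn (fun S' => S' \ T)
    · intro S' hS'
      rw [mem_coe, mem_filter, mem_powersetCard] at hS'
      rw [mem_coe, mem_powersetCard]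
      refine ⟨fun i hi => ?_, ?_⟩
      · rw [mem_sdiff] at hi; simpa using hi.2
      · rw [card_sdiff_of_subset hS'.2, hS'.1.2]
    · intro a ha b hb hab
      rw [mem_coe, mem_filter] at ha hb
      have hab' : a \ T = b \ T := hab
      rw [← Finset.sdiff_union_of_subset ha.2, ← Finset.sdiff_union_of_subset hb.2, hab']
  rwa [card_powersetCard, card_compl, Fintype.card_fin] at key

lemma statement13_inner (n s : ℕ) (hs : 0 < s) (h2s : 2*s ≤ n) (c : ℝ) (hc : 0 ≤ c)
    (S : Finset (Fin n)) (hS : S.card = s) :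
    ∑ S' ∈ Finset.powersetCard s (univ : Finset (Fin n)), Real.exp (c * ((S ∩ S').card : ℝ))
      ≤ (n.choose s : ℝ) *
        ((s:ℝ)/((n:ℝ)-(s:ℝ)) * (Real.exp c - 1) + 1)^s := by
  classical
  set t : ℝ := Real.exp c - 1 with ht_def
  set p : ℝ := (s:ℝ)/((n:ℝ)-(s:ℝ)) with hp_def
  have ht : 0 ≤ t := by
    have := Real.one_le_exp hc
    simp [ht_def]; linarith
  have hp : 0 ≤ p := by
    have h1 : (0:ℝ) < (n:ℝ) - s := by
      have : s < n := by omega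
      have h2 : (s:ℝ) < n := by exact_mod_cast this
      linarith
    positivity
  have e0 : ∀ S' : Finset (Fin n),
      Real.exp (c * ((S ∩ S').card : ℝ))
        = ∑ T ∈ S.powerset, (if T ⊆ S' then t ^ T.card else 0) := by
    intro S'
    have e1 : Real.exp (c * ((S ∩ S').card : ℝ)) = (Real.exp c) ^ (S ∩ S').card := by
      rw [mul_comm]; exact Real.exp_nat_mul c _
    have e2 : (Real.exp c) ^ (S ∩ S').card
        = ∏ i ∈ S, (t * (if i ∈ S' then (1:ℝ) else 0) + 1) := by
      calc (Real.exp c) ^ (S ∩ S').card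
          = ∏ _i ∈ S ∩ S', Real.exp c := by rw [prod_const]
        _ = ∏ i ∈ S.filter (· ∈ S'), Real.exp c := by rw [filter_mem_eq_inter]
        _ = ∏ i ∈ S, (if i ∈ S' then Real.exp c else 1) := prod_filter _ _
        _ = ∏ i ∈ S, (t * (if i ∈ S' then (1:ℝ) else 0) + 1) := by
            refine prod_congr rfl fun i _ => ?_
            by_cases h : i ∈ S' <;> simp [h, ht_def]
    have e3 := Finset.prod_add (fun i => t * (if i ∈ S' then (1:ℝ) else 0))
        (fun _ => (1:ℝ)) S
    rw [e1, e2, e3]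
    refine sum_congr rfl fun T hT => ?_
    rw [prod_const_one, mul_one]
    by_cases h : T ⊆ S'
    · rw [if_pos h]
      calc ∏ i ∈ T, (t * if i ∈ S' then (1:ℝ) else 0)
          = ∏ _i ∈ T, t := prod_congr rfl fun i hi => by rw [if_pos (h hi), mul_one]
        _ = t ^ T.card := prod_const t
    · rw [if_neg h]
      obtain ⟨i, hiT, hiS'⟩ := not_subset.1 h
      exact prod_eq_zero hiT (by rw [if_neg hiS', mul_zero])
  calc ∑ S' ∈ Finset.powersetCard s (univ : Finset (Fin n)),
        Real.exp (c * ((S ∩ S').card : ℝ))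
      = ∑ S' ∈ Finset.powersetCard s (univ : Finset (Fin n)),
          ∑ T ∈ S.powerset, (if T ⊆ S' then t ^ T.card else 0) :=
        sum_congr rfl fun S' _ => e0 S'
    _ = ∑ T ∈ S.powerset, ∑ S' ∈ Finset.powersetCard s (univ : Finset (Fin n)),
          (if T ⊆ S' then t ^ T.card else 0) := sum_comm
    _ = ∑ T ∈ S.powerset,
          (((Finset.powersetCard s (univ : Finset (Fin n))).filter
              (fun S' => T ⊆ S')).card : ℝ) * t ^ T.card := by
        refine sum_congr rfl fun T _ => ?_
        rw [sum_ite, sum_const, sum_const_zero, add_zero, nsmul_eq_mul]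
    _ ≤ ∑ T ∈ S.powerset, (n.choose s : ℝ) * p ^ T.card * t ^ T.card := by
        refine sum_le_sum fun T hT => ?_
        have hTs : T.card ≤ s := hS ▸ card_le_card (mem_powerset.1 hT)
        have h1 : (((Finset.powersetCard s (univ : Finset (Fin n))).filter
            (fun S' => T ⊆ S')).card : ℝ) ≤ ((n - T.card).choose (s - T.card) : ℝ) := by
          exact_mod_cast statement13_countB n s T
        have h2 := statement13_realA n s hs h2s T.card hTs
        exact mul_le_mul_of_nonneg_right (h1.trans h2) (pow_nonneg ht _)
    _ = (n.choose s : ℝ) * ∑ T ∈ S.powerset, (p * t) ^ T.card := by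
        rw [mul_sum]; exact sum_congr rfl fun T _ => by rw [mul_pow]; ring
    _ = (n.choose s : ℝ) * (p * t + 1) ^ s := by
        congr 1
        have e4 := Finset.prod_add (fun _ : Fin n => p * t) (fun _ => (1:ℝ)) S
        rw [prod_const, hS] at e4
        rw [e4]
        exact sum_congr rfl fun T _ => by rw [prod_const, prod_const_one, mul_one]

/-- hypergeometric mgf bound.  For independent uniformly random
`s`-element subsets `S, S'` of `{1,…,n}` with `2s ≤ n` and `c ≥ 0`,
`E[exp(c |S ∩ S'|)] ≤ (1 − s/(n−s) + (s/(n−s)) e^c)^s`. -/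
theorem statement13 (n s : ℕ) (hs : 0 < s) (h2s : 2 * s ≤ n) (c : ℝ) (hc : 0 ≤ c) :
    (∑ S ∈ Finset.powersetCard s (Finset.univ : Finset (Fin n)),
        ∑ S' ∈ Finset.powersetCard s (Finset.univ : Finset (Fin n)),
          Real.exp (c * ((S ∩ S').card : ℝ))) / ((n.choose s : ℝ)) ^ 2
      ≤ (1 - (s : ℝ) / ((n : ℝ) - s) + (s : ℝ) / ((n : ℝ) - s) * Real.exp c) ^ s := by
  have hsn : s ≤ n := by omega
  have hC : (0:ℝ) < (n.choose s : ℝ) := by exact_mod_cast Nat.choose_pos hsn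
  have hB : ∑ S ∈ Finset.powersetCard s (Finset.univ : Finset (Fin n)),
        ∑ S' ∈ Finset.powersetCard s (Finset.univ : Finset (Fin n)),
          Real.exp (c * ((S ∩ S').card : ℝ))
      ≤ (n.choose s : ℝ) * ((n.choose s : ℝ) *
          ((s:ℝ)/((n:ℝ)-(s:ℝ)) * (Real.exp c - 1) + 1)^s) := by
    calc ∑ S ∈ Finset.powersetCard s (Finset.univ : Finset (Fin n)),
          ∑ S' ∈ Finset.powersetCard s (Finset.univ : Finset (Fin n)),
            Real.exp (c * ((S ∩ S').card : ℝ))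
        ≤ ∑ S ∈ Finset.powersetCard s (Finset.univ : Finset (Fin n)),
            (n.choose s : ℝ) * ((s:ℝ)/((n:ℝ)-(s:ℝ)) * (Real.exp c - 1) + 1)^s := by
          refine sum_le_sum fun S hSmem => ?_
          have hScard : S.card = s := (mem_powersetCard.1 hSmem).2
          exact statement13_inner n s hs h2s c hc S hScard
      _ = (n.choose s : ℝ) * ((n.choose s : ℝ) *
            ((s:ℝ)/((n:ℝ)-(s:ℝ)) * (Real.exp c - 1) + 1)^s) := by
          rw [sum_const, card_powersetCard, card_univ, Fintype.card_fin, nsmul_eq_mul]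
  rw [div_le_iff₀ (by positivity)]
  have hre : (1 - (s : ℝ) / ((n : ℝ) - s) + (s : ℝ) / ((n : ℝ) - s) * Real.exp c) ^ s
      = ((s:ℝ)/((n:ℝ)-(s:ℝ)) * (Real.exp c - 1) + 1)^s := by ring_nf
  rw [hre]
  calc _ ≤ (n.choose s : ℝ) * ((n.choose s : ℝ) *
          ((s:ℝ)/((n:ℝ)-(s:ℝ)) * (Real.exp c - 1) + 1)^s) := hB
    _ = ((s:ℝ)/((n:ℝ)-(s:ℝ)) * (Real.exp c - 1) + 1)^s * (n.choose s : ℝ)^2 := by ring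
end
end

section
/- Let L be a nonnegative integrable random variable with E[L] = 1, let Ω be any measurable event, and set L̃ = L · 1_Ω. If E[L̃²] < ∞, then E[|L − 1|] ≤ √(E[L̃²] − 2 E[L̃] + 1) + 1 − E[L̃]. -/
open MeasureTheory Real

noncomputable section

lemma aux_abs_le_sqrt {Ω : Type*} [MeasurableSpace Ω] (μ : Measure Ω)
    [IsProbabilityMeasure μ] (X : Ω → ℝ) (hX2 : MemLp X 2 μ) :
    ∫ ω, |X ω| ∂μ ≤ Real.sqrt (∫ ω, X ω ^ 2 ∂μ) := by
  have hconj : (2:ℝ).HolderConjugate 2 := Real.HolderConjugate.two_two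
  have h2 : (ENNReal.ofReal 2) = (2 : ENNReal) := by norm_num
  have h1 : MemLp (fun _ : Ω => (1:ℝ)) (ENNReal.ofReal 2) μ := by
    simpa using memLp_const (μ := μ) (1:ℝ)
  have habs : MemLp (fun ω => |X ω|) (ENNReal.ofReal 2) μ := by
    rw [h2]
    simpa [Real.norm_eq_abs] using hX2.norm
  have := integral_mul_le_Lp_mul_Lq_of_nonneg (μ := μ) hconj
    (f := fun ω => |X ω|) (g := fun _ => (1:ℝ))
    (Filter.Eventually.of_forall fun ω => abs_nonneg _)
    (Filter.Eventually.of_forall fun _ => zero_le_one) habs h1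
  simp only [mul_one, one_pow] at this
  have hpow : ∀ ω, |X ω| ^ (2:ℝ) = X ω ^ 2 := by
    intro ω
    rw [show ((2:ℝ)) = ((2:ℕ):ℝ) by norm_num, Real.rpow_natCast, sq_abs]
  rw [show ((1:ℝ) ^ (2:ℝ)) = 1 by norm_num] at this
  simp only [hpow, integral_const, measure_univ, probReal_univ, ENNReal.toReal_one, smul_eq_mul,
    one_mul, Real.one_rpow, mul_one] at this
  calc ∫ ω, |X ω| ∂μ ≤ (∫ ω, X ω ^ 2 ∂μ) ^ (1/(2:ℝ)) := this
    _ = Real.sqrt (∫ ω, X ω ^ 2 ∂μ) := by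
        rw [Real.sqrt_eq_rpow]

/-- truncated second moment bound.  For a nonnegative integrable
`L` with `E[L] = 1`, any event `Ω₀`, and `L̃ = L·1_{Ω₀}` with `E[L̃²] < ∞`,
`E[|L − 1|] ≤ √(E[L̃²] − 2 E[L̃] + 1) + 1 − E[L̃]`. -/
theorem statement14 {Ω : Type*} [MeasurableSpace Ω] (μ : Measure Ω)
    [IsProbabilityMeasure μ]
    (L : Ω → ℝ) (hL : Integrable L μ) (hLnn : ∀ ω, 0 ≤ L ω)
    (hL1 : ∫ ω, L ω ∂μ = 1)
    (A : Set Ω) (hA : MeasurableSet A)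
    (hL2 : Integrable (fun ω => (A.indicator L ω) ^ 2) μ) :
    ∫ ω, |L ω - 1| ∂μ ≤
      Real.sqrt ((∫ ω, (A.indicator L ω) ^ 2 ∂μ) - 2 * (∫ ω, A.indicator L ω ∂μ) + 1)
        + 1 - ∫ ω, A.indicator L ω ∂μ := by
  set g : Ω → ℝ := A.indicator L with hg_def
  have hg : Integrable g μ := hL.indicator hA
  -- pointwise bound: |L - 1| ≤ |g - 1| + (L - g)
  have hpt : ∀ ω, |L ω - 1| ≤ |g ω - 1| + (L ω - g ω) := by
    intro ω
    by_cases h : ω ∈ A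
    · simp [hg_def, Set.indicator_of_mem h]
    · simp only [hg_def, Set.indicator_of_notMem h, sub_zero, zero_sub, abs_neg, abs_one]
      have h0 := hLnn ω
      exact abs_le.mpr ⟨by linarith, by linarith⟩
  -- integrabilities
  have hg1 : Integrable (fun ω => |g ω - 1|) μ := (hg.sub (integrable_const 1)).abs
  have hsq : Integrable (fun ω => (g ω - 1) ^ 2) μ := by
    have h' : Integrable (fun ω => g ω ^ 2 - 2 * g ω + 1) μ :=
      (hL2.sub (hg.const_mul 2)).add (integrable_const 1)
    refine h'.congr (Filter.Eventually.of_forall fun ω => ?_)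
    ring
  have hmem : MemLp (fun ω => g ω - 1) 2 μ := by
    rw [memLp_two_iff_integrable_sq]
    · exact hsq
    · exact ((hL.aestronglyMeasurable.indicator hA).sub aestronglyMeasurable_const)
  -- integrate the pointwise bound
  have hint : ∫ ω, |L ω - 1| ∂μ ≤ (∫ ω, |g ω - 1| ∂μ) + (1 - ∫ ω, g ω ∂μ) := by
    have hLg : Integrable (fun ω => L ω - g ω) μ := hL.sub hg
    have h1 : ∫ ω, |L ω - 1| ∂μ ≤ ∫ ω, (|g ω - 1| + (L ω - g ω)) ∂μ := by
      refine integral_mono (hL.sub (integrable_const 1)).abs (hg1.add hLg) hpt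
    rw [integral_add hg1 hLg, integral_sub hL hg, hL1] at h1
    exact h1
  -- Cauchy-Schwarz step
  have hcs : ∫ ω, |g ω - 1| ∂μ ≤
      Real.sqrt ((∫ ω, g ω ^ 2 ∂μ) - 2 * (∫ ω, g ω ∂μ) + 1) := by
    have := aux_abs_le_sqrt μ (fun ω => g ω - 1) hmem
    have heq : ∫ ω, (g ω - 1) ^ 2 ∂μ = (∫ ω, g ω ^ 2 ∂μ) - 2 * (∫ ω, g ω ∂μ) + 1 := by
      have : ∀ ω, (g ω - 1) ^ 2 = g ω ^ 2 - 2 * g ω + 1 := fun ω => by ring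
      simp_rw [this]
      have hq1 : Integrable (fun ω => g ω ^ 2 - 2 * g ω) μ := hL2.sub (hg.const_mul 2)
      rw [integral_add hq1 (integrable_const 1),
        integral_sub hL2 (hg.const_mul 2), integral_const_mul]
      simp
    rw [heq] at this
    exact this
  calc ∫ ω, |L ω - 1| ∂μ ≤ (∫ ω, |g ω - 1| ∂μ) + (1 - ∫ ω, g ω ∂μ) := hint
    _ ≤ Real.sqrt ((∫ ω, g ω ^ 2 ∂μ) - 2 * (∫ ω, g ω ∂μ) + 1) + (1 - ∫ ω, g ω ∂μ) := by
        linarith [hcs]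
    _ = _ := by ring
end
end

section
/- Let x = (x_{ij} : i ∈ [n], j ∈ [t]) be a real array, let z ∈ ℝ, and let π be uniformly distributed over the (nt)! permutations of the index set [n]×[t]. Let N = Σ_{i∈[n]} 1{Y_i(x^π) ≥ z} and p = P(Y₁(x^π) ≥ z). Then Var(N) ≤ n p (1 − p). -/
open Real Filter

attribute [local instance] Classical.propDecidable

noncomputable section

section aux
open Finset



lemma exists_perm_image_eq {S : Type*} [Fintype S] [DecidableEq S]
    (P₁ P₂ Q₁ Q₂ : Finset S) (hP : Disjoint P₁ P₂) (hQ : Disjoint Q₁ Q₂)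
    (h₁ : P₁.card = Q₁.card) (h₂ : P₂.card = Q₂.card) :
    ∃ ρ : Equiv.Perm S, P₁.image ρ = Q₁ ∧ P₂.image ρ = Q₂ := by
  have hc : ((P₁ ∪ P₂)ᶜ : Finset S).card = ((Q₁ ∪ Q₂)ᶜ : Finset S).card := by
    rw [card_compl, card_compl, card_union_of_disjoint hP, card_union_of_disjoint hQ, h₁, h₂]
  let e₁ : (P₁ : Finset S) ≃ (Q₁ : Finset S) := Finset.equivOfCardEq h₁
  let e₂ : (P₂ : Finset S) ≃ (Q₂ : Finset S) := Finset.equivOfCardEq h₂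
  let e₃ : ((P₁ ∪ P₂)ᶜ : Finset S) ≃ ((Q₁ ∪ Q₂)ᶜ : Finset S) := Finset.equivOfCardEq hc
  let f : S → S := fun s =>
    if h : s ∈ P₁ then (e₁ ⟨s, h⟩ : S)
    else if h2 : s ∈ P₂ then (e₂ ⟨s, h2⟩ : S)
    else (e₃ ⟨s, by simp [mem_compl, mem_union, h, h2]⟩ : S)
  have hfQ₁ : ∀ s (h : s ∈ P₁), f s ∈ Q₁ := by
    intro s h; simp only [f, dif_pos h]; exact (e₁ ⟨s, h⟩).2
  have hfQ₂ : ∀ s (h : s ∉ P₁) (h2 : s ∈ P₂), f s ∈ Q₂ := by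
    intro s h h2; simp only [f, dif_neg h, dif_pos h2]; exact (e₂ ⟨s, h2⟩).2
  have hfQ₃ : ∀ s (h : s ∉ P₁) (h2 : s ∉ P₂), f s ∈ (Q₁ ∪ Q₂)ᶜ := by
    intro s h h2; simp only [f, dif_neg h, dif_neg h2]
    exact (e₃ ⟨s, by simp [mem_compl, mem_union, h, h2]⟩).2
  have hQd := Finset.disjoint_left.1 hQ
  have hinj : Function.Injective f := by
    intro a b hab
    by_cases ha1 : a ∈ P₁ <;> by_cases hb1 : b ∈ P₁
    · have := hab
      simp only [f, dif_pos ha1, dif_pos hb1] at this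
      have := e₁.injective (Subtype.ext this)
      exact congrArg Subtype.val this
    · by_cases hb2 : b ∈ P₂
      · exact absurd (hab ▸ hfQ₂ b hb1 hb2) (hQd (hfQ₁ a ha1))
      · have := hfQ₃ b hb1 hb2
        rw [← hab] at this
        simp [mem_compl, mem_union, hfQ₁ a ha1] at this
    · by_cases ha2 : a ∈ P₂
      · exact absurd ((hab ▸ hfQ₂ a ha1 ha2 : f b ∈ Q₂)) (fun hh => hQd (hfQ₁ b hb1) hh)
      · have := hfQ₃ a ha1 ha2
        rw [hab] at this
        simp [mem_compl, mem_union, hfQ₁ b hb1] at this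
    · by_cases ha2 : a ∈ P₂ <;> by_cases hb2 : b ∈ P₂
      · have := hab
        simp only [f, dif_neg ha1, dif_neg hb1, dif_pos ha2, dif_pos hb2] at this
        have := e₂.injective (Subtype.ext this)
        exact congrArg Subtype.val this
      · have := hfQ₃ b hb1 hb2
        rw [← hab] at this
        simp [mem_compl, mem_union, hfQ₂ a ha1 ha2] at this
      · have := hfQ₃ a ha1 ha2
        rw [hab] at this
        simp [mem_compl, mem_union, hfQ₂ b hb1 hb2] at this
      · have := hab
        simp only [f, dif_neg ha1, dif_neg hb1, dif_neg ha2, dif_neg hb2] at this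
        have h3 := e₃.injective (Subtype.ext this)
        exact congrArg Subtype.val h3
  let ρ := Equiv.ofBijective f (Finite.injective_iff_bijective.1 hinj)
  refine ⟨ρ, ?_, ?_⟩
  · apply Finset.eq_of_subset_of_card_le
    · intro s hs
      rcases Finset.mem_image.1 hs with ⟨a, ha, rfl⟩
      exact hfQ₁ a ha
    · rw [Finset.card_image_of_injective _ ρ.injective, h₁]
  · apply Finset.eq_of_subset_of_card_le
    · intro s hs
      rcases Finset.mem_image.1 hs with ⟨a, ha, rfl⟩
      by_cases h1 : a ∈ P₁
      · exact absurd ha (Finset.disjoint_left.1 hP h1)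
      · exact hfQ₂ a h1 ha
    · rw [Finset.card_image_of_injective _ ρ.injective, h₂]



lemma sum_comp_key_mul_card {S X : Type*} [Fintype S] [DecidableEq S] [DecidableEq X]
    (key : Equiv.Perm S → X) (T : Finset X)
    (hmem : ∀ σ, key σ ∈ T)
    (htrans : ∀ p ∈ T, ∀ q ∈ T, ∃ ρ : Equiv.Perm S,
      ∀ σ : Equiv.Perm S, key (σ.trans ρ) = q ↔ key σ = p)
    (F : X → ℝ) :
    (∑ σ : Equiv.Perm S, F (key σ)) * (T.card : ℝ)
      = (∑ p ∈ T, F p) * (Fintype.card (Equiv.Perm S) : ℝ) := by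
  classical
  set fib : X → Finset (Equiv.Perm S) := fun p => univ.filter (fun σ => key σ = p) with hfib
  have hcard : ∀ p ∈ T, ∀ q ∈ T, (fib p).card = (fib q).card := by
    intro p hp q hq
    obtain ⟨ρ, hρ⟩ := htrans p hp q hq
    apply Finset.card_bij (fun σ _ => σ.trans ρ)
    · intro σ hσ
      simp only [fib, mem_filter, mem_univ, true_and] at hσ ⊢
      exact (hρ σ).2 hσ
    · intro σ₁ h1 σ₂ h2 h
      have := congrArg (fun τ => τ.trans ρ.symm) h
      simpa [Equiv.trans_assoc] using this
    · intro τ hτ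
      simp only [fib, mem_filter, mem_univ, true_and] at hτ
      refine ⟨τ.trans ρ.symm, ?_, ?_⟩
      · simp only [fib, mem_filter, mem_univ, true_and]
        apply (hρ (τ.trans ρ.symm)).1
        simpa [Equiv.trans_assoc] using hτ
      · ext s; simp
  have hsum : ∀ G : X → ℝ, (∑ σ : Equiv.Perm S, G (key σ)) = ∑ p ∈ T, G p * ((fib p).card : ℝ) := by
    intro G
    rw [← Finset.sum_fiberwise_of_maps_to (fun σ _ => hmem σ) (fun σ => G (key σ))]
    refine Finset.sum_congr rfl fun p hp => ?_
    rw [Finset.sum_congr rfl (fun σ hσ => ?_), Finset.sum_const, nsmul_eq_mul, mul_comm]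
    · simp only [fib, mem_filter, mem_univ, true_and] at hσ
      rw [hσ]
  have hM : (Fintype.card (Equiv.Perm S) : ℝ) = ∑ p ∈ T, ((fib p).card : ℝ) := by
    have := hsum (fun _ => (1:ℝ))
    simpa using this
  rw [hsum F, hM, Finset.sum_mul, Finset.sum_mul]
  refine Finset.sum_congr rfl fun p hp => ?_
  have hT : (∑ q ∈ T, ((fib q).card : ℝ)) = (T.card : ℝ) * ((fib p).card : ℝ) := by
    rw [Finset.sum_congr rfl (fun q hq => by rw [hcard q hq p hp]), Finset.sum_const,
      nsmul_eq_mul]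
  rw [hT]; ring



/-- Strictly monotone `t`-tuples in `Fin m`: the dominance lattice of `t`-subsets. -/
def SMT (m t : ℕ) : Type := {f : Fin t → Fin m // StrictMono f}

namespace SMT

variable {m t : ℕ}

instance : Fintype (SMT m t) := Subtype.fintype _

instance : Max (SMT m t) :=
  ⟨fun f g => ⟨f.1 ⊔ g.1, fun i j h => by
    simpa [Pi.sup_apply] using max_lt_max (f.2 h) (g.2 h)⟩⟩

instance : Min (SMT m t) :=
  ⟨fun f g => ⟨f.1 ⊓ g.1, fun i j h => by
    simpa [Pi.inf_apply] using min_lt_min (f.2 h) (g.2 h)⟩⟩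

instance : LE (SMT m t) := ⟨fun f g => f.1 ≤ g.1⟩

instance : LT (SMT m t) := ⟨fun f g => f.1 < g.1⟩

instance : DistribLattice (SMT m t) :=
  Function.Injective.distribLattice Subtype.val Subtype.val_injective
    Iff.rfl Iff.rfl (fun _ _ => rfl) (fun _ _ => rfl)

lemma le_iff {f g : SMT m t} : f ≤ g ↔ ∀ k, f.1 k ≤ g.1 k := Iff.rfl

/-- The underlying `t`-subset. -/
def rg (f : SMT m t) : Finset (Fin m) := Finset.image f.1 univ

lemma card_rg (f : SMT m t) : (rg f).card = t := by
  rw [rg, Finset.card_image_of_injective _ f.2.injective, card_univ, Fintype.card_fin]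

lemma rg_mem (f : SMT m t) : rg f ∈ powersetCard t (univ : Finset (Fin m)) :=
  Finset.mem_powersetCard.2 ⟨subset_univ _, card_rg f⟩

lemma sum_rg (w : Fin m → ℝ) (f : SMT m t) : ∑ s ∈ rg f, w s = ∑ k, w (f.1 k) :=
  Finset.sum_image fun a _ b _ h => f.2.injective h

end SMT

section helpers

variable {m t : ℕ}

lemma image_orderEmbOfFin (s : Finset (Fin m)) {k : ℕ} (h : s.card = k) :
    Finset.image (s.orderEmbOfFin h) univ = s := by
  rw [← Finset.coe_inj, Finset.coe_image, Finset.coe_univ, Set.image_univ,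
    Finset.range_orderEmbOfFin]

lemma card_filter_le_image {k : ℕ} (f : Fin k → Fin m) (hf : Function.Injective f) (y : Fin m) :
    (univ.filter fun i => y ≤ f i).card = ((Finset.image f univ).filter fun a => y ≤ a).card := by
  apply Finset.card_bij (fun i _ => f i)
  · intro i hi
    simp only [mem_filter, mem_univ, true_and] at hi ⊢
    exact ⟨Finset.mem_image_of_mem _ (mem_univ _), hi⟩
  · intro i _ j _ h
    exact hf h
  · intro a ha
    simp only [mem_filter, Finset.mem_image] at ha
    obtain ⟨⟨i, _, rfl⟩, hy⟩ := ha
    exact ⟨i, by simp [hy], rfl⟩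

/-- A strictly monotone tuple is pointwise dominated by another iff threshold counts compare. -/
lemma le_of_counts {k : ℕ} (u v : Fin k → Fin m) (hu : StrictMono u) (hv : StrictMono v)
    (h : ∀ y, (univ.filter fun i => y ≤ u i).card ≤ (univ.filter fun i => y ≤ v i).card) :
    ∀ i, u i ≤ v i := by
  intro i
  by_contra hlt
  push_neg at hlt
  have h1 : (univ.filter fun j => u i ≤ u j) = univ.filter fun j => i ≤ j := by
    apply Finset.filter_congr
    intro j _
    simp [hu.le_iff_le]
  have hiU : i ∉ univ.filter fun j => u i ≤ v j := by
    simp [not_le.2 hlt]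
  have hsub : (univ.filter fun j => u i ≤ v j) ⊆ univ.filter fun j => i < j := by
    intro j hj
    simp only [mem_filter, mem_univ, true_and] at hj ⊢
    rcases lt_trichotomy i j with h' | rfl | h'
    · exact h'
    · exact absurd (by simp [hj]) hiU
    · exact absurd (by simp [le_trans hj (hv.monotone h'.le)] : u i ≤ v i) (not_le.2 hlt)
  have h2 : (univ.filter fun j => i ≤ j) = insert i (univ.filter fun j => i < j) := by
    ext j
    simp only [mem_filter, mem_univ, true_and, Finset.mem_insert]
    constructor
    · intro hij; rcases eq_or_lt_of_le hij with h' | h'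
      · exact Or.inl h'.symm
      · exact Or.inr h'
    · rintro (rfl | h')
      · exact le_rfl
      · exact h'.le
  have h3 : (univ.filter fun j => i < j).card + 1 ≤ (univ.filter fun j => u i ≤ v j).card := by
    have := h (u i)
    rw [h1, h2, Finset.card_insert_of_notMem (by simp)] at this
    omega
  have h4 := Finset.card_le_card hsub
  omega

lemma count_compl_add (B : Finset (Fin m)) (y : Fin m) :
    (((univ : Finset (Fin m)) \ B).filter fun a => y ≤ a).card
      + (B.filter fun a => y ≤ a).card = ((univ : Finset (Fin m)).filter fun a => y ≤ a).card := by
  rw [← Finset.card_union_of_disjoint]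
  · congr 1
    ext a
    simp only [Finset.mem_union, mem_filter, Finset.mem_sdiff, mem_univ, true_and]
    tauto
  · rw [Finset.disjoint_left]
    intro a ha ha'
    simp only [mem_filter, Finset.mem_sdiff, mem_univ, true_and] at ha ha'
    exact ha.1 ha'.1

end helpers

section core

variable {m t : ℕ}

lemma div_le_div_right_nonneg {a b c : ℝ} (h : a ≤ b) (hc : 0 ≤ c) : a / c ≤ b / c := by
  rcases hc.eq_or_lt with rfl | h'
  · simp
  · exact (div_le_div_iff_of_pos_right h').2 h

lemma card_sdiff_rg (f : SMT m t) :
    ((univ : Finset (Fin m)) \ SMT.rg f).card = m - t := by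
  rw [Finset.card_sdiff_of_subset (subset_univ _), card_univ, Fintype.card_fin, SMT.card_rg]

lemma comp_emb_le {f g : SMT m t} (hfg : f ≤ g) :
    ∀ i, ((univ \ SMT.rg g).orderEmbOfFin (card_sdiff_rg g)) i
      ≤ ((univ \ SMT.rg f).orderEmbOfFin (card_sdiff_rg f)) i := by
  apply le_of_counts _ _ ((univ \ SMT.rg g).orderEmbOfFin (card_sdiff_rg g)).strictMono
    ((univ \ SMT.rg f).orderEmbOfFin (card_sdiff_rg f)).strictMono
  intro y
  have cu : (univ.filter fun i => y ≤ ((univ \ SMT.rg g).orderEmbOfFin (card_sdiff_rg g)) i).card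
      = ((univ \ SMT.rg g).filter fun a => y ≤ a).card := by
    rw [card_filter_le_image _ ((univ \ SMT.rg g).orderEmbOfFin (card_sdiff_rg g)).injective,
      image_orderEmbOfFin]
  have cv : (univ.filter fun i => y ≤ ((univ \ SMT.rg f).orderEmbOfFin (card_sdiff_rg f)) i).card
      = ((univ \ SMT.rg f).filter fun a => y ≤ a).card := by
    rw [card_filter_le_image _ ((univ \ SMT.rg f).orderEmbOfFin (card_sdiff_rg f)).injective,
      image_orderEmbOfFin]
  have h1 := count_compl_add (SMT.rg g) y
  have h2 := count_compl_add (SMT.rg f) y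
  have h3 : ((SMT.rg f).filter fun a => y ≤ a).card ≤ ((SMT.rg g).filter fun a => y ≤ a).card := by
    have e1 : ((SMT.rg f).filter fun a => y ≤ a).card
        = (univ.filter fun i => y ≤ f.1 i).card :=
      (card_filter_le_image f.1 f.2.injective y).symm
    have e2 : ((SMT.rg g).filter fun a => y ≤ a).card
        = (univ.filter fun i => y ≤ g.1 i).card :=
      (card_filter_le_image g.1 g.2.injective y).symm
    rw [e1, e2]
    apply Finset.card_le_card
    intro i hi
    simp only [mem_filter, mem_univ, true_and] at hi ⊢
    exact le_trans hi (hfg i)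
  omega

variable (w : Fin m → ℝ) (z : ℝ)

/-- Number of good `t`-subsets of the complement. -/
def NTn (f : SMT m t) : ℕ :=
  ((powersetCard t ((univ : Finset (Fin m)) \ SMT.rg f)).filter
    (fun B => z ≤ (∑ s ∈ B, w s) / t)).card

lemma NTn_anti (hw : Monotone w) {f g : SMT m t} (hfg : f ≤ g) : NTn w z g ≤ NTn w z f := by
  classical
  set u := ((univ \ SMT.rg g).orderEmbOfFin (card_sdiff_rg g)) with hu
  set v := ((univ \ SMT.rg f).orderEmbOfFin (card_sdiff_rg f)) with hv
  have huv := comp_emb_le hfg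
  apply Finset.card_le_card_of_injOn
    (fun B => Finset.image (fun k => v k) (univ.filter (fun k => u k ∈ B)))
  · intro B hB
    simp only [Finset.mem_coe, mem_filter, Finset.mem_powersetCard] at hB ⊢
    obtain ⟨⟨hBs, hBc⟩, hBg⟩ := hB
    have hBK : B = Finset.image (fun k => u k) (univ.filter (fun k => u k ∈ B)) := by
      ext a
      simp only [Finset.mem_image, mem_filter, mem_univ, true_and]
      constructor
      · intro ha
        have : a ∈ Finset.image (fun k => u k) univ := by
          rw [hu, image_orderEmbOfFin]
          exact hBs ha
        rcases Finset.mem_image.1 this with ⟨k, _, rfl⟩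
        exact ⟨k, ha, rfl⟩
      · rintro ⟨k, hk, rfl⟩
        exact hk
    have hKcard : (univ.filter (fun k => u k ∈ B)).card = t := by
      have := congrArg Finset.card hBK
      rw [Finset.card_image_of_injective _ u.injective] at this
      omega
    refine ⟨⟨?_, ?_⟩, ?_⟩
    · intro a ha
      rcases Finset.mem_image.1 ha with ⟨k, _, rfl⟩
      rw [hv]
      exact Finset.orderEmbOfFin_mem _ _ _
    · rw [Finset.card_image_of_injective _ v.injective, hKcard]
    · have hsum : ∑ s ∈ B, w s ≤ ∑ s ∈ Finset.image (fun k => v k) (univ.filter (fun k => u k ∈ B)), w s := by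
        rw [Finset.sum_image (fun a _ b _ h => v.injective h)]
        conv_lhs => rw [hBK]
        rw [Finset.sum_image (fun a _ b _ h => u.injective h)]
        exact Finset.sum_le_sum fun k _ => hw (huv k)
      exact le_trans hBg (div_le_div_right_nonneg hsum (Nat.cast_nonneg t))
  · intro B₁ h₁ B₂ h₂ h
    have hK : (univ.filter (fun k => u k ∈ B₁)) = (univ.filter (fun k => u k ∈ B₂)) :=
      Finset.image_injective v.injective h
    simp only [Finset.coe_filter, Finset.mem_coe, mem_filter, Finset.mem_powersetCard] at h₁ h₂
    have hBK1 : B₁ = Finset.image (fun k => u k) (univ.filter (fun k => u k ∈ B₁)) := by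
      ext a
      simp only [Finset.mem_image, mem_filter, mem_univ, true_and]
      constructor
      · intro ha
        have : a ∈ Finset.image (fun k => u k) univ := by
          rw [hu, image_orderEmbOfFin]
          exact h₁.1.1 ha
        rcases Finset.mem_image.1 this with ⟨k, _, rfl⟩
        exact ⟨k, ha, rfl⟩
      · rintro ⟨k, hk, rfl⟩
        exact hk
    have hBK2 : B₂ = Finset.image (fun k => u k) (univ.filter (fun k => u k ∈ B₂)) := by
      ext a
      simp only [Finset.mem_image, mem_filter, mem_univ, true_and]
      constructor
      · intro ha
        have : a ∈ Finset.image (fun k => u k) univ := by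
          rw [hu, image_orderEmbOfFin]
          exact h₂.1.1 ha
        rcases Finset.mem_image.1 this with ⟨k, _, rfl⟩
        exact ⟨k, ha, rfl⟩
      · rintro ⟨k, hk, rfl⟩
        exact hk
    rw [hBK1, hBK2, hK]

end core

section corefin

variable {m t : ℕ}

lemma sum_SMT (F : Finset (Fin m) → ℝ) :
    ∑ B ∈ powersetCard t (univ : Finset (Fin m)), F B = ∑ f : SMT m t, F (SMT.rg f) := by
  refine Finset.sum_bij'
    (i := fun B hB => (⟨(B.orderEmbOfFin ((Finset.mem_powersetCard.1 hB).2) : Fin t → Fin m),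
      (B.orderEmbOfFin ((Finset.mem_powersetCard.1 hB).2)).strictMono⟩ : SMT m t))
    (j := fun f _ => SMT.rg f)
    (fun B hB => mem_univ _) (fun f _ => SMT.rg_mem f)
    (fun B hB => image_orderEmbOfFin B _)
    (fun f _ => Subtype.ext (Finset.orderEmbOfFin_unique (SMT.card_rg f)
      (fun x => Finset.mem_image_of_mem _ (mem_univ _)) f.2).symm)
    (fun B hB => ?_)
  rw [show SMT.rg ⟨(B.orderEmbOfFin ((Finset.mem_powersetCard.1 hB).2) : Fin t → Fin m),
      (B.orderEmbOfFin ((Finset.mem_powersetCard.1 hB).2)).strictMono⟩ = B from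
      image_orderEmbOfFin B _]

lemma core_fin (w : Fin m → ℝ) (hw : Monotone w) (z : ℝ) :
    (∑ B ∈ powersetCard t (univ : Finset (Fin m)),
        (if z ≤ (∑ s ∈ B, w s) / t then (1:ℝ) else 0)
          * ((((powersetCard t ((univ : Finset (Fin m)) \ B)).filter
              (fun C => z ≤ (∑ s ∈ C, w s) / t)).card : ℝ)))
      * ((powersetCard t (univ : Finset (Fin m))).card : ℝ)
    ≤ (∑ B ∈ powersetCard t (univ : Finset (Fin m)),
          if z ≤ (∑ s ∈ B, w s) / t then (1:ℝ) else 0)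
      * (∑ B ∈ powersetCard t (univ : Finset (Fin m)),
          (((powersetCard t ((univ : Finset (Fin m)) \ B)).filter
            (fun C => z ≤ (∑ s ∈ C, w s) / t)).card : ℝ)) := by
  classical
  set a : SMT m t → ℝ := fun f => if z ≤ (∑ s ∈ SMT.rg f, w s) / t then (1:ℝ) else 0 with ha
  set Nr : SMT m t → ℝ := fun f => ((NTn w z f : ℕ) : ℝ) with hNr
  set K : ℝ := (((m - t).choose t : ℕ) : ℝ) with hK
  have hNK : ∀ f : SMT m t, Nr f ≤ K := by
    intro f
    rw [hNr, hK]
    have h1 : NTn w z f ≤ (powersetCard t ((univ : Finset (Fin m)) \ SMT.rg f)).card :=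
      Finset.card_filter_le _ _
    have h2 : (powersetCard t ((univ : Finset (Fin m)) \ SMT.rg f)).card = (m - t).choose t := by
      rw [Finset.card_powersetCard, card_sdiff_rg]
    have h3 := h2 ▸ h1
    dsimp only
    exact_mod_cast h3
  have ha_mono : Monotone a := by
    intro f g hfg
    have hsum : (∑ s ∈ SMT.rg f, w s) ≤ ∑ s ∈ SMT.rg g, w s := by
      rw [SMT.sum_rg, SMT.sum_rg]
      exact Finset.sum_le_sum fun k _ => hw (hfg k)
    rw [ha]
    dsimp only
    split_ifs with h1 h2
    · exact le_rfl
    · exact absurd (le_trans h1 (div_le_div_right_nonneg hsum (Nat.cast_nonneg t))) h2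
    · norm_num
    · exact le_rfl
  have hg_mono : Monotone (fun f => K - Nr f) := by
    intro f g hfg
    have h := NTn_anti w z hw hfg
    simp only [sub_le_sub_iff_left, hNr]
    exact_mod_cast h
  have ha_nn : 0 ≤ a := by
    intro f
    rw [ha]
    dsimp only
    split_ifs <;> norm_num
  have hg_nn : (0 : SMT m t → ℝ) ≤ fun f => K - Nr f := by
    intro f
    have := hNK f
    simp only [Pi.zero_apply]
    linarith
  have hμ0 : (0 : SMT m t → ℝ) ≤ fun _ => (1:ℝ) := by
    intro f
    simp only [Pi.zero_apply]
    norm_num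
  have hfkg := fkg a (fun f => K - Nr f) (fun _ => (1:ℝ))
    hμ0 ha_nn hg_nn ha_mono hg_mono (fun p q => by norm_num)
  simp only [one_mul, Finset.sum_const, card_univ, nsmul_eq_mul, mul_one] at hfkg
  -- rearrange
  have e1 : (∑ f : SMT m t, (K - Nr f)) = K * (Fintype.card (SMT m t) : ℝ) - ∑ f : SMT m t, Nr f := by
    rw [Finset.sum_sub_distrib, Finset.sum_const, card_univ, nsmul_eq_mul, mul_comm]
  have e2 : (∑ f : SMT m t, a f * (K - Nr f))
      = K * (∑ f : SMT m t, a f) - ∑ f : SMT m t, a f * Nr f := by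
    rw [Finset.mul_sum, ← Finset.sum_sub_distrib]
    exact Finset.sum_congr rfl fun f _ => by ring
  rw [e1, e2] at hfkg
  have key : (∑ f : SMT m t, a f * Nr f) * (Fintype.card (SMT m t) : ℝ)
      ≤ (∑ f : SMT m t, a f) * (∑ f : SMT m t, Nr f) := by nlinarith [hfkg]
  have hcard : ((powersetCard t (univ : Finset (Fin m))).card : ℝ)
      = (Fintype.card (SMT m t) : ℝ) := by
    have := sum_SMT (m := m) (t := t) (fun _ => (1:ℝ))
    simpa [Finset.sum_const, card_univ] using this
  rw [sum_SMT (fun B => (if z ≤ (∑ s ∈ B, w s) / t then (1:ℝ) else 0)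
      * ((((powersetCard t ((univ : Finset (Fin m)) \ B)).filter
        (fun C => z ≤ (∑ s ∈ C, w s) / t)).card : ℝ))),
    sum_SMT (fun B => if z ≤ (∑ s ∈ B, w s) / t then (1:ℝ) else 0),
    sum_SMT (fun B => (((powersetCard t ((univ : Finset (Fin m)) \ B)).filter
      (fun C => z ≤ (∑ s ∈ C, w s) / t)).card : ℝ)), hcard]
  exact key

end corefin

section transfer

variable {α : Type*} [Fintype α] [DecidableEq α] {m t : ℕ}

lemma inner_count (e : Fin m ≃ α) (x : α → ℝ) (t : ℕ) (z : ℝ) (B : Finset α) :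
    ((powersetCard t ((univ : Finset α) \ B)).filter
        (fun C => z ≤ (∑ s ∈ C, x s) / t)).card
      = ((powersetCard t ((univ : Finset (Fin m)) \ B.image e.symm)).filter
        (fun C => z ≤ (∑ s ∈ C, x (e s)) / t)).card := by
  have hsum : ∀ C : Finset α, ∑ s ∈ C.image e.symm, x (e s) = ∑ s ∈ C, x s := by
    intro C
    rw [Finset.sum_image (fun a _ b _ h => e.symm.injective h)]
    exact Finset.sum_congr rfl fun c _ => by rw [Equiv.apply_symm_apply]
  apply Finset.card_nbij (i := fun C => C.image e.symm)
  · intro C hC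
    simp only [Finset.mem_coe, mem_filter, Finset.mem_powersetCard] at hC ⊢
    obtain ⟨⟨hCs, hCc⟩, hCg⟩ := hC
    refine ⟨⟨?_, ?_⟩, ?_⟩
    · intro a ha
      rcases Finset.mem_image.1 ha with ⟨c, hc, rfl⟩
      have hcb := hCs hc
      simp only [Finset.mem_sdiff, mem_univ, true_and, Finset.mem_image] at hcb ⊢
      rintro ⟨b, hb, hixb⟩
      exact hcb ((e.symm.injective hixb) ▸ hb)
    · rw [Finset.card_image_of_injective _ e.symm.injective]; exact hCc
    · rw [hsum]; exact hCg
  · intro C₁ h₁ C₂ h₂ h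
    exact Finset.image_injective e.symm.injective h
  · intro C' hC'
    simp only [Set.mem_image, Finset.mem_coe, mem_filter, Finset.mem_powersetCard] at hC' ⊢
    obtain ⟨⟨hCs, hCc⟩, hCg⟩ := hC'
    refine ⟨C'.image e, ?_, ?_⟩
    · have himg : (C'.image e).image e.symm = C' := by
        rw [Finset.image_image]
        simp
      refine ⟨⟨?_, ?_⟩, ?_⟩
      · intro a ha
        rcases Finset.mem_image.1 ha with ⟨k, hk, rfl⟩
        have := hCs hk
        simp only [Finset.mem_sdiff, mem_univ, true_and, Finset.mem_image] at this ⊢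
        intro hb
        exact this ⟨e k, hb, by simp⟩
      · rw [Finset.card_image_of_injective _ e.injective]; exact hCc
      · rw [← himg, hsum] at hCg
        exact hCg
    · rw [Finset.image_image]
      simp

lemma sum_image_equiv (e : Fin m ≃ α) (x : α → ℝ) (C : Finset α) :
    ∑ s ∈ C.image e.symm, x (e s) = ∑ s ∈ C, x s := by
  rw [Finset.sum_image (fun a _ b _ h => e.symm.injective h)]
  exact Finset.sum_congr rfl fun c _ => by rw [Equiv.apply_symm_apply]

lemma mem_pt_image {β γ : Type*} [Fintype β] [Fintype γ] [DecidableEq β] [DecidableEq γ]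
    (e : β ≃ γ) (B : Finset β) (hB : B ∈ powersetCard t (univ : Finset β)) :
    B.image e ∈ powersetCard t (univ : Finset γ) := by
  simp only [Finset.mem_powersetCard] at hB ⊢
  exact ⟨subset_univ _, by rw [Finset.card_image_of_injective _ e.injective]; exact hB.2⟩

lemma core_general (x : α → ℝ) (t : ℕ) (z : ℝ) :
    (∑ B ∈ powersetCard t (univ : Finset α),
        (if z ≤ (∑ s ∈ B, x s) / t then (1:ℝ) else 0)
          * ((((powersetCard t ((univ : Finset α) \ B)).filter
              (fun C => z ≤ (∑ s ∈ C, x s) / t)).card : ℝ)))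
      * ((powersetCard t (univ : Finset α)).card : ℝ)
    ≤ (∑ B ∈ powersetCard t (univ : Finset α),
          if z ≤ (∑ s ∈ B, x s) / t then (1:ℝ) else 0)
      * (∑ B ∈ powersetCard t (univ : Finset α),
          (((powersetCard t ((univ : Finset α) \ B)).filter
            (fun C => z ≤ (∑ s ∈ C, x s) / t)).card : ℝ)) := by
  classical
  set e : Fin (Fintype.card α) ≃ α :=
    ((Tuple.sort (x ∘ (Fintype.equivFin α).symm)).trans (Fintype.equivFin α).symm) with he
  have hwmono : Monotone (fun k => x (e k)) := Tuple.monotone_sort (x ∘ (Fintype.equivFin α).symm)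
  have hbij : ∀ (F : Finset α → ℝ) (G : Finset (Fin (Fintype.card α)) → ℝ),
      (∀ B ∈ powersetCard t (univ : Finset α), F B = G (B.image e.symm)) →
      ∑ B ∈ powersetCard t (univ : Finset α), F B
        = ∑ B ∈ powersetCard t (univ : Finset (Fin (Fintype.card α))), G B := by
    intro F G hFG
    apply Finset.sum_nbij' (i := fun B => B.image e.symm) (j := fun B => B.image e)
    · exact fun B hB => mem_pt_image e.symm B hB
    · exact fun B hB => mem_pt_image e B hB
    · intro B _
      rw [Finset.image_image]
      simp
    · intro B _
      rw [Finset.image_image]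
      simp
    · exact hFG
  have hcardpt : ((powersetCard t (univ : Finset α)).card : ℝ)
      = ((powersetCard t (univ : Finset (Fin (Fintype.card α)))).card : ℝ) := by
    rw [Finset.card_powersetCard, Finset.card_powersetCard, card_univ, card_univ,
      Fintype.card_fin]
  rw [hbij (fun B => (if z ≤ (∑ s ∈ B, x s) / t then (1:ℝ) else 0)
        * ((((powersetCard t ((univ : Finset α) \ B)).filter
            (fun C => z ≤ (∑ s ∈ C, x s) / t)).card : ℝ)))
      (fun B => (if z ≤ (∑ s ∈ B, x (e s)) / t then (1:ℝ) else 0)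
        * ((((powersetCard t ((univ : Finset (Fin (Fintype.card α))) \ B)).filter
            (fun C => z ≤ (∑ s ∈ C, x (e s)) / t)).card : ℝ)))
      (fun B _ => by rw [inner_count e x t z B, sum_image_equiv e x B]),
    hbij (fun B => if z ≤ (∑ s ∈ B, x s) / t then (1:ℝ) else 0)
      (fun B => if z ≤ (∑ s ∈ B, x (e s)) / t then (1:ℝ) else 0)
      (fun B _ => by rw [sum_image_equiv e x B]),
    hbij (fun B => (((powersetCard t ((univ : Finset α) \ B)).filter
            (fun C => z ≤ (∑ s ∈ C, x s) / t)).card : ℝ))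
      (fun B => (((powersetCard t ((univ : Finset (Fin (Fintype.card α))) \ B)).filter
            (fun C => z ≤ (∑ s ∈ C, x (e s)) / t)).card : ℝ))
      (fun B _ => by rw [inner_count e x t z B]),
    hcardpt]
  exact core_fin (fun k => x (e k)) hwmono z

end transfer

end aux

/-- Stream mean `Y_i(x) = (1/t) Σ_j x_{ij}`. -/
def streamMean (n t : ℕ) (x : Fin n × Fin t → ℝ) (i : Fin n) : ℝ :=
  (∑ j, x (i, j)) / t

open Finset in
set_option maxHeartbeats 1000000 in
/-- variance bound for the permutation count, via negative
association.  For a uniformly random permutation `π` of the array indices, with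
`N = Σ_i 1{Y_i(x^π) ≥ z}` and `p = P(Y₁(x^π) ≥ z)`, one has `Var(N) ≤ n p (1 − p)`. -/
theorem statement17 (n t : ℕ) (hn : 0 < n) (x : Fin n × Fin t → ℝ) (z : ℝ) :
    let Nf : Equiv.Perm (Fin n × Fin t) → ℝ := fun σ =>
      ((Finset.univ.filter fun i : Fin n =>
          streamMean n t (fun p => x (σ p)) i ≥ z).card : ℝ)
    let E : (Equiv.Perm (Fin n × Fin t) → ℝ) → ℝ := fun f =>
      (∑ σ : Equiv.Perm (Fin n × Fin t), f σ) / (n * t).factorial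
    let p : ℝ := E fun σ =>
      if streamMean n t (fun p => x (σ p)) ⟨0, hn⟩ ≥ z then 1 else 0
    E (fun σ => (Nf σ - E Nf) ^ 2) ≤ n * p * (1 - p) := by
  intro Nf E p
  classical
  set M : ℝ := ((n * t).factorial : ℝ) with hM
  have hMpos : (0:ℝ) < M := by positivity
  have cardPerm : ((Fintype.card (Equiv.Perm (Fin n × Fin t)) : ℕ) : ℝ) = M := by
    rw [hM, Fintype.card_perm, Fintype.card_prod, Fintype.card_fin, Fintype.card_fin]
  set ind : Fin n → Equiv.Perm (Fin n × Fin t) → ℝ :=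
    fun i σ => if streamMean n t (fun q => x (σ q)) i ≥ z then 1 else 0 with hind
  set blk : Fin n → Finset (Fin n × Fin t) :=
    fun i => Finset.image (fun j : Fin t => ((i, j) : Fin n × Fin t)) univ with hblk
  have hblk_card : ∀ i, (blk i).card = t := by
    intro i
    rw [hblk]
    rw [Finset.card_image_of_injective _
      (fun a b h => by simpa using congrArg Prod.snd h), card_univ, Fintype.card_fin]
  have hblk_disj : ∀ i j : Fin n, i ≠ j → Disjoint (blk i) (blk j) := by
    intro i j hij
    rw [Finset.disjoint_left]
    intro s hsi hsj
    rw [hblk] at hsi hsj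
    rcases Finset.mem_image.1 hsi with ⟨a, _, rfl⟩
    rcases Finset.mem_image.1 hsj with ⟨b, _, hab⟩
    have hfst : j = i := by simpa using congrArg Prod.fst hab
    exact hij hfst.symm
  set Pt : Finset (Finset (Fin n × Fin t)) :=
    powersetCard t (univ : Finset (Fin n × Fin t)) with hPt
  set goodR : Finset (Fin n × Fin t) → ℝ :=
    fun B => if z ≤ (∑ s ∈ B, x s) / t then 1 else 0 with hgoodR
  set Ag : ℝ := ∑ B ∈ Pt, goodR B with hAg
  set Cm : ℝ := (Pt.card : ℝ) with hCm
  have hkey1mem : ∀ (i : Fin n) (σ : Equiv.Perm (Fin n × Fin t)), (blk i).image σ ∈ Pt := by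
    intro i σ
    rw [hPt, Finset.mem_powersetCard]
    refine ⟨subset_univ _, ?_⟩
    rw [Finset.card_image_of_injective _ σ.injective, hblk_card]
  have hind_goodR : ∀ (i : Fin n) (σ : Equiv.Perm (Fin n × Fin t)),
      ind i σ = goodR ((blk i).image σ) := by
    intro i σ
    have hsum : ∑ s ∈ (blk i).image σ, x s = ∑ j, x (σ (i, j)) := by
      rw [Finset.sum_image (fun a _ b _ hh => σ.injective hh), hblk]
      dsimp only
      rw [Finset.sum_image (fun a _ b _ hh => by simpa using congrArg Prod.snd hh)]
    rw [hind, hgoodR]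
    dsimp only
    rw [hsum]
    simp only [streamMean, ge_iff_le]
  have himgmove : ∀ (i : Fin n) (σ ρ : Equiv.Perm (Fin n × Fin t)),
      (blk i).image (σ.trans ρ) = ((blk i).image σ).image ρ := by
    intro i σ ρ
    calc (blk i).image (σ.trans ρ) = (blk i).image (ρ ∘ σ) := by rw [Equiv.coe_trans]
    _ = ((blk i).image σ).image ρ := by conv_rhs => rw [Finset.image_image]
  have hA : ∀ i : Fin n, (∑ σ : Equiv.Perm (Fin n × Fin t), ind i σ) * Cm = Ag * M := by
    intro i
    have := sum_comp_key_mul_card (fun σ => (blk i).image σ) Pt (hkey1mem i) ?_ goodR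
    · rw [hCm, hAg]
      rw [Finset.sum_congr rfl (fun σ _ => hind_goodR i σ)]
      rw [show (∑ σ : Equiv.Perm (Fin n × Fin t), goodR ((blk i).image σ))
        = ∑ σ : Equiv.Perm (Fin n × Fin t),
          goodR ((fun σ : Equiv.Perm (Fin n × Fin t) => (blk i).image σ) σ) from rfl,
        this, cardPerm]
    · intro a ha b hb
      have hac : a.card = t := (Finset.mem_powersetCard.1 (hPt ▸ ha)).2
      have hbc : b.card = t := (Finset.mem_powersetCard.1 (hPt ▸ hb)).2
      obtain ⟨ρ, hρ1, _⟩ := exists_perm_image_eq a ∅ b ∅ (disjoint_bot_right)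
        (disjoint_bot_right) (by rw [hac, hbc]) rfl
      refine ⟨ρ, fun σ => ?_⟩
      rw [himgmove]
      constructor
      · intro h
        apply Finset.image_injective ρ.injective
        rw [h, hρ1]
      · intro h
        rw [h, hρ1]

  -- pair-level quantities
  set TP : Finset (Finset (Fin n × Fin t) × Finset (Fin n × Fin t)) :=
    (Pt ×ˢ Pt).filter (fun pq => Disjoint pq.1 pq.2) with hTP
  set NR : Finset (Fin n × Fin t) → ℝ :=
    fun B => ∑ B₂ ∈ powersetCard t ((univ : Finset (Fin n × Fin t)) \ B), goodR B₂ with hNR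
  set Cp : ℝ := ((n * t - t).choose t : ℝ) with hCp
  have hfilter_eq' : ∀ B : Finset (Fin n × Fin t),
      Pt.filter (fun C => Disjoint C B)
        = powersetCard t ((univ : Finset (Fin n × Fin t)) \ B) := by
    intro B
    ext C
    simp only [mem_filter, hPt, Finset.mem_powersetCard, Finset.subset_sdiff]
    tauto
  have hfilter_eq : ∀ B : Finset (Fin n × Fin t),
      Pt.filter (fun C => Disjoint B C)
        = powersetCard t ((univ : Finset (Fin n × Fin t)) \ B) := by
    intro B
    rw [← hfilter_eq' B]
    apply Finset.filter_congr
    intro C _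
    simp [disjoint_comm]
  have hrestr : ∀ g h : Finset (Fin n × Fin t) → ℝ,
      ∑ pq ∈ TP, g pq.1 * h pq.2
        = ∑ B₁ ∈ Pt, g B₁ * ∑ B₂ ∈ powersetCard t ((univ : Finset (Fin n × Fin t)) \ B₁), h B₂ := by
    intro g h
    rw [hTP, Finset.sum_filter, Finset.sum_product]
    refine Finset.sum_congr rfl fun B₁ _ => ?_
    dsimp only
    rw [← Finset.sum_filter, hfilter_eq B₁, ← Finset.mul_sum]
  have hrestr2 : ∀ g h : Finset (Fin n × Fin t) → ℝ,
      ∑ pq ∈ TP, g pq.1 * h pq.2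
        = ∑ B₂ ∈ Pt,
            (∑ B₁ ∈ powersetCard t ((univ : Finset (Fin n × Fin t)) \ B₂), g B₁) * h B₂ := by
    intro g h
    rw [hTP, Finset.sum_filter, Finset.sum_product, Finset.sum_comm]
    refine Finset.sum_congr rfl fun B₂ _ => ?_
    dsimp only
    rw [← Finset.sum_filter, hfilter_eq' B₂, ← Finset.sum_mul]
  have hCp_eval : ∀ B ∈ Pt,
      ((powersetCard t ((univ : Finset (Fin n × Fin t)) \ B)).card : ℝ) = Cp := by
    intro B hB
    rw [Finset.card_powersetCard, Finset.card_sdiff_of_subset (subset_univ _), card_univ,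
      Fintype.card_prod, Fintype.card_fin, Fintype.card_fin,
      (Finset.mem_powersetCard.1 (hPt ▸ hB)).2, hCp]
  have hTPc : ((TP.card : ℕ) : ℝ) = Cm * Cp := by
    have h1 : ((TP.card : ℕ) : ℝ) = ∑ pq ∈ TP, (1:ℝ) * 1 := by simp
    rw [h1, hrestr (fun _ => (1:ℝ)) (fun _ => (1:ℝ))]
    rw [Finset.sum_congr rfl (fun B hB => ?_), Finset.sum_const, nsmul_eq_mul, hCm]
    rw [one_mul, Finset.sum_const, nsmul_eq_mul, mul_one, hCp_eval B hB]
  have hNRtot : ∑ B ∈ Pt, NR B = Ag * Cp := by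
    have h1 := hrestr (fun _ => (1:ℝ)) goodR
    have h2 := hrestr2 (fun _ => (1:ℝ)) goodR
    simp only [one_mul] at h1 h2
    rw [hNR]
    dsimp only
    rw [← h1, h2, hAg, Finset.sum_mul]
    refine Finset.sum_congr rfl fun B hB => ?_
    rw [Finset.sum_const, nsmul_eq_mul, mul_one, hCp_eval B hB, mul_comm]
  have hDCm : (∑ pq ∈ TP, goodR pq.1 * goodR pq.2) * Cm ≤ Ag * (Ag * Cp) := by
    rw [hrestr goodR goodR, ← hNRtot]
    have hconv : ∀ B : Finset (Fin n × Fin t),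
        NR B = (((powersetCard t ((univ : Finset (Fin n × Fin t)) \ B)).filter
          (fun C => z ≤ (∑ s ∈ C, x s) / t)).card : ℝ) := by
      intro B
      rw [hNR, hgoodR]
      dsimp only
      exact Finset.sum_boole _ _
    have hcore := core_general x t z
    rw [Finset.sum_congr rfl (fun B _ => by rw [hconv B] :
        ∀ B ∈ Pt, goodR B * NR B = goodR B * _), hgoodR, hCm, hPt]
    rw [Finset.sum_congr rfl (fun B (_ : B ∈ Pt) => hconv B)]
    rw [hAg, hgoodR, hPt]
    exact hcore
  -- pairwise bound
  have hCmpos : (0:ℝ) < Cm := by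
    rw [hCm]
    exact_mod_cast Finset.card_pos.2 ⟨_, hkey1mem ⟨0, hn⟩ 1⟩
  have hpair : ∀ i j : Fin n, i ≠ j →
      (∑ σ : Equiv.Perm (Fin n × Fin t), ind i σ * ind j σ) * M
        ≤ (∑ σ : Equiv.Perm (Fin n × Fin t), ind i σ)
            * (∑ σ : Equiv.Perm (Fin n × Fin t), ind j σ) := by
    intro i j hij
    have hkey2mem : ∀ σ : Equiv.Perm (Fin n × Fin t),
        (((blk i).image σ, (blk j).image σ) : Finset (Fin n × Fin t) × Finset (Fin n × Fin t))
          ∈ TP := by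
      intro σ
      rw [hTP, mem_filter, Finset.mem_product]
      refine ⟨⟨hkey1mem i σ, hkey1mem j σ⟩, ?_⟩
      dsimp only
      rw [Finset.disjoint_image σ.injective]
      exact hblk_disj i j hij
    have hcnt := sum_comp_key_mul_card
      (fun σ : Equiv.Perm (Fin n × Fin t) => (((blk i).image σ, (blk j).image σ)))
      TP hkey2mem ?_ (fun pq => goodR pq.1 * goodR pq.2)
    · have hTPpos : (0:ℝ) < ((TP.card : ℕ) : ℝ) := by
        exact_mod_cast Finset.card_pos.2 ⟨_, hkey2mem 1⟩
      have hCppos : (0:ℝ) < Cp := by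
        rcases mul_pos_iff.1 (hTPc ▸ hTPpos) with ⟨_, h⟩ | ⟨h, _⟩
        · exact h
        · exact absurd hCmpos (not_lt.2 h.le)
      have hgind : ∀ σ : Equiv.Perm (Fin n × Fin t),
          ind i σ * ind j σ
            = goodR ((blk i).image σ) * goodR ((blk j).image σ) := by
        intro σ
        rw [hind_goodR i σ, hind_goodR j σ]
      have hgood_sum : (∑ σ : Equiv.Perm (Fin n × Fin t), ind i σ * ind j σ)
          = ∑ σ : Equiv.Perm (Fin n × Fin t),
              (fun pq : Finset (Fin n × Fin t) × Finset (Fin n × Fin t) =>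
                goodR pq.1 * goodR pq.2)
              ((fun σ : Equiv.Perm (Fin n × Fin t) =>
                (((blk i).image σ, (blk j).image σ))) σ) :=
        Finset.sum_congr rfl (fun σ _ => by dsimp only; exact hgind σ)
      have hcnt2 : (∑ σ : Equiv.Perm (Fin n × Fin t), ind i σ * ind j σ) * (Cm * Cp)
          = (∑ pq ∈ TP, goodR pq.1 * goodR pq.2) * M := by
        rw [hgood_sum, ← hTPc, ← cardPerm]
        exact hcnt
      set SP : ℝ := ∑ σ : Equiv.Perm (Fin n × Fin t), ind i σ * ind j σ with hSP
      set Dg : ℝ := ∑ pq ∈ TP, goodR pq.1 * goodR pq.2 with hDg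
      have hSi := hA i
      have hSj := hA j
      apply le_of_mul_le_mul_right _ (show (0:ℝ) < Cm * Cm * Cp by positivity)
      calc SP * M * (Cm * Cm * Cp)
          = (SP * (Cm * Cp)) * (M * Cm) := by ring
        _ = (Dg * M) * (M * Cm) := by rw [hcnt2]
        _ = (Dg * Cm) * (M * M) := by ring
        _ ≤ (Ag * (Ag * Cp)) * (M * M) := by
            apply mul_le_mul_of_nonneg_right (hDCm) (by positivity)
        _ = (Ag * M) * (Ag * M) * Cp := by ring
        _ = ((∑ σ : Equiv.Perm (Fin n × Fin t), ind i σ) * Cm)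
              * ((∑ σ : Equiv.Perm (Fin n × Fin t), ind j σ) * Cm) * Cp := by rw [hSi, hSj]
        _ = (∑ σ : Equiv.Perm (Fin n × Fin t), ind i σ)
              * (∑ σ : Equiv.Perm (Fin n × Fin t), ind j σ) * (Cm * Cm * Cp) := by ring
    · intro a ha b hb
      rw [hTP, mem_filter, Finset.mem_product] at ha hb
      obtain ⟨⟨ha1, ha2⟩, had⟩ := ha
      obtain ⟨⟨hb1, hb2⟩, hbd⟩ := hb
      obtain ⟨ρ, hρ1, hρ2⟩ := exists_perm_image_eq a.1 a.2 b.1 b.2 had hbd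
        (by rw [(Finset.mem_powersetCard.1 (hPt ▸ ha1)).2,
          (Finset.mem_powersetCard.1 (hPt ▸ hb1)).2])
        (by rw [(Finset.mem_powersetCard.1 (hPt ▸ ha2)).2,
          (Finset.mem_powersetCard.1 (hPt ▸ hb2)).2])
      refine ⟨ρ, fun σ => ?_⟩
      rw [himgmove, himgmove, Prod.ext_iff, Prod.ext_iff]
      dsimp only
      constructor
      · rintro ⟨h1, h2⟩
        constructor
        · apply Finset.image_injective ρ.injective
          rw [h1, hρ1]
        · apply Finset.image_injective ρ.injective
          rw [h2, hρ2]
      · rintro ⟨h1, h2⟩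
        rw [h1, h2, hρ1, hρ2]
        exact ⟨rfl, rfl⟩
  -- assembling the variance bound
  set i0 : Fin n := ⟨0, hn⟩ with hi0
  set Sa : ℝ := ∑ σ : Equiv.Perm (Fin n × Fin t), ind i0 σ with hSa
  have hSa_all : ∀ i, (∑ σ : Equiv.Perm (Fin n × Fin t), ind i σ) = Sa := by
    intro i
    have h1 := hA i
    have h0 := hA i0
    apply mul_right_cancel₀ (ne_of_gt hCmpos)
    rw [h1, hSa, h0]
  have hp : p = Sa / M := rfl
  have hSaM : Sa = p * M := by rw [hp]; field_simp
  have hNf : ∀ σ : Equiv.Perm (Fin n × Fin t), Nf σ = ∑ i, ind i σ := by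
    intro σ
    show ((Finset.univ.filter fun i : Fin n =>
      streamMean n t (fun q => x (σ q)) i ≥ z).card : ℝ) = _
    rw [Finset.card_filter, hind]
    push_cast
    try rfl
  have hSumNf : (∑ σ : Equiv.Perm (Fin n × Fin t), Nf σ) = n * Sa := by
    rw [Finset.sum_congr rfl fun σ _ => hNf σ, Finset.sum_comm]
    rw [Finset.sum_congr rfl fun i (_ : i ∈ univ) => hSa_all i, Finset.sum_const, card_univ,
      Fintype.card_fin, nsmul_eq_mul]
  have hQd : ∀ i, (∑ σ : Equiv.Perm (Fin n × Fin t), ind i σ * ind i σ) = Sa := by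
    intro i
    rw [← hSa_all i]
    refine Finset.sum_congr rfl fun σ _ => ?_
    rw [hind]
    dsimp only
    split_ifs <;> norm_num
  have hSa_nonneg : 0 ≤ Sa := by
    rw [hSa]
    apply Finset.sum_nonneg
    intro σ _
    rw [hind]
    dsimp only
    split_ifs <;> norm_num
  have hSumNfSq : (∑ σ : Equiv.Perm (Fin n × Fin t), Nf σ ^ 2)
      ≤ (n : ℝ) * Sa + ((n : ℝ) * ((n : ℝ) - 1)) * (Sa * Sa / M) := by
    have hsq : ∀ σ : Equiv.Perm (Fin n × Fin t),
        Nf σ ^ 2 = ∑ i, ∑ j, ind i σ * ind j σ := by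
      intro σ
      rw [hNf σ, sq, Finset.sum_mul_sum]
    rw [Finset.sum_congr rfl fun σ _ => hsq σ, Finset.sum_comm]
    have hswap : ∀ i : Fin n,
        (∑ σ : Equiv.Perm (Fin n × Fin t), ∑ j, ind i σ * ind j σ)
          = ∑ j, ∑ σ : Equiv.Perm (Fin n × Fin t), ind i σ * ind j σ := fun i =>
      Finset.sum_comm
    rw [Finset.sum_congr rfl fun i (_ : i ∈ univ) => hswap i]
    have hbi : ∀ i : Fin n,
        (∑ j, ∑ σ : Equiv.Perm (Fin n × Fin t), ind i σ * ind j σ)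
          ≤ Sa + ((n : ℝ) - 1) * (Sa * Sa / M) := by
      intro i
      rw [← Finset.sum_erase_add _ _ (mem_univ i), hQd i, add_comm]
      apply add_le_add_right
      have h2 : ∀ j ∈ univ.erase i,
          (∑ σ : Equiv.Perm (Fin n × Fin t), ind i σ * ind j σ) ≤ Sa * Sa / M := by
        intro j hj
        have hji : j ≠ i := Finset.ne_of_mem_erase hj
        have hb := hpair i j (Ne.symm hji)
        rw [hSa_all i, hSa_all j] at hb
        rw [le_div_iff₀ hMpos]
        exact hb
      calc (∑ j ∈ univ.erase i, ∑ σ : Equiv.Perm (Fin n × Fin t), ind i σ * ind j σ)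
          ≤ ∑ _j ∈ univ.erase i, (Sa * Sa / M) := Finset.sum_le_sum h2
        _ = ((n : ℝ) - 1) * (Sa * Sa / M) := by
            rw [Finset.sum_const, nsmul_eq_mul, Finset.card_erase_of_mem (mem_univ i),
              card_univ, Fintype.card_fin]
            congr 1
            have : (1:ℕ) ≤ n := hn
            push_cast [Nat.cast_sub this]
            ring
    calc (∑ i, ∑ j, ∑ σ : Equiv.Perm (Fin n × Fin t), ind i σ * ind j σ)
        ≤ ∑ _i : Fin n, (Sa + ((n : ℝ) - 1) * (Sa * Sa / M)) :=
          Finset.sum_le_sum fun i _ => hbi i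
      _ = (n : ℝ) * (Sa + ((n : ℝ) - 1) * (Sa * Sa / M)) := by
          rw [Finset.sum_const, card_univ, Fintype.card_fin, nsmul_eq_mul]
      _ = (n : ℝ) * Sa + ((n : ℝ) * ((n : ℝ) - 1)) * (Sa * Sa / M) := by ring
  have hENf : E Nf = (n : ℝ) * p := by
    show (∑ σ : Equiv.Perm (Fin n × Fin t), Nf σ) / ((n * t).factorial : ℝ) = (n : ℝ) * p
    rw [hSumNf, hSaM]
    have : ((n * t).factorial : ℝ) = M := rfl
    rw [this]
    field_simp
  have hexp : (∑ σ : Equiv.Perm (Fin n × Fin t), (Nf σ - E Nf) ^ 2)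
      = (∑ σ : Equiv.Perm (Fin n × Fin t), Nf σ ^ 2)
        - 2 * (E Nf) * (∑ σ : Equiv.Perm (Fin n × Fin t), Nf σ) + M * (E Nf) ^ 2 := by
    have h1 : ∀ σ : Equiv.Perm (Fin n × Fin t),
        (Nf σ - E Nf) ^ 2 = Nf σ ^ 2 - (2 * (E Nf)) * Nf σ + (E Nf) ^ 2 := fun σ => by ring
    rw [Finset.sum_congr rfl fun σ _ => h1 σ, Finset.sum_add_distrib, Finset.sum_sub_distrib,
      ← Finset.mul_sum, Finset.sum_const, card_univ, nsmul_eq_mul, cardPerm]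
    try ring
  show (∑ σ : Equiv.Perm (Fin n × Fin t), (Nf σ - E Nf) ^ 2) / ((n * t).factorial : ℝ)
    ≤ (n : ℝ) * p * (1 - p)
  have hMM : ((n * t).factorial : ℝ) = M := rfl
  rw [hMM, div_le_iff₀ hMpos, hexp, hSumNf, hENf]
  have hb2 : (∑ σ : Equiv.Perm (Fin n × Fin t), Nf σ ^ 2)
      ≤ (n : ℝ) * (p * M) + ((n : ℝ) * ((n : ℝ) - 1)) * (p * p * M) := by
    have hb := hSumNfSq
    rw [hSaM] at hb
    calc (∑ σ : Equiv.Perm (Fin n × Fin t), Nf σ ^ 2)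
        ≤ (n : ℝ) * (p * M) + ((n : ℝ) * ((n : ℝ) - 1)) * ((p * M) * (p * M) / M) := hb
      _ = (n : ℝ) * (p * M) + ((n : ℝ) * ((n : ℝ) - 1)) * (p * p * M) := by
          field_simp
  rw [hSaM]
  nlinarith [hb2]
end
end
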